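/- arXiv:2401.00130 — 6 statements merged into one kernel-verified Lean document; each statement's English description precedes it below -/
import Mathlib

section
/- Let 𝒮 be a triangulated category with a good metric ℳ = {ℳ_n}, let 𝒜 be a full subcategory of 𝒮, and let X_0 →^{f_1} X_1 →^{f_2} X_2 → ⋯ be a Cauchy sequence with respect to ℳ with X_n ∈ 𝒜 for all n. If there exists m ∈ ℕ such that 𝒜 ⊆ ℳ_m^⊥ (or such that 𝒜 ⊆ ^⊥ℳ_m), then the sequence is stable: there exists t ∈ ℕ such that f_{n+1} : X_n → X_{n+1} is an isomorphism for all n ≥ t. -/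
open CategoryTheory Limits Pretriangulated

universe v u

namespace Paper

variable (C : Type u) [Category.{v} C] [HasZeroObject C] [HasShift C ℤ]
  [Preadditive C] [∀ n : ℤ, (shiftFunctor C n).Additive] [Pretriangulated C]

/-- `Z` is a direct sum of `X` and `Y`. -/
def IsDirSum {C : Type u} [Category.{v} C] [Preadditive C] (Z X Y : C) : Prop :=
  ∃ (i₁ : X ⟶ Z) (i₂ : Y ⟶ Z) (p₁ : Z ⟶ X) (p₂ : Z ⟶ Y),
    i₁ ≫ p₁ = 𝟙 X ∧ i₂ ≫ p₂ = 𝟙 Y ∧ i₁ ≫ p₂ = 0 ∧ i₂ ≫ p₁ = 0 ∧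
    p₁ ≫ i₁ + p₂ ≫ i₂ = 𝟙 Z

/-- The extension `A * B` of two classes of objects. -/
def star (A B : Set C) : Set C :=
  {Z | ∃ (X Y : C) (f : X ⟶ Z) (g : Z ⟶ Y) (h : Y ⟶ (X⟦(1:ℤ)⟧ : C)),
      X ∈ A ∧ Y ∈ B ∧ Triangle.mk f g h ∈ distTriang C}

/-- Closure of a class of objects under finite direct sums and isomorphism. -/
inductive addClos (A : Set C) : C → Prop
  | of {X Y : C} (e : X ≅ Y) (hY : Y ∈ A) : addClos A X
  | zero {X : C} (hX : IsZero X) : addClos A X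
  | dirSum {Z X Y : C} (hX : addClos A X) (hY : addClos A Y) (h : IsDirSum Z X Y) :
      addClos A Z

/-- `coprodN A n` is `coprod_n (A)`; by convention `coprodN A 0` consists of zero objects. -/
def coprodN (A : Set C) : ℕ → Set C
  | 0 => {X | IsZero X}
  | 1 => setOf (addClos C A)
  | (n+2) => star C (setOf (addClos C A)) (coprodN A (n+1))

/-- Direct summands of objects in `A`. -/
def smd (A : Set C) : Set C := {X | ∃ (Z Y : C), Z ∈ A ∧ IsDirSum Z X Y}

/-- The class `G[I] = {G[-i] : i ∈ I}` (up to isomorphism). -/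
def shiftsOf (G : C) (I : Set ℤ) : Set C :=
  {X | ∃ i ∈ I, Nonempty (X ≅ (G⟦(-i : ℤ)⟧ : C))}

/-- `⟨G⟩ₙ^I := smd (coprodₙ (G[I]))`. -/
def genN (G : C) (I : Set ℤ) (n : ℕ) : Set C := smd C (coprodN C (shiftsOf C G I) n)

/-- `⟨G⟩^I := ⋃_{n > 0} ⟨G⟩ₙ^I`. -/
def gen (G : C) (I : Set ℤ) : Set C := {X | ∃ n : ℕ, X ∈ genN C G I (n+1)}

/-- The right orthogonal `G[I]^⊥`. -/
def rPerpShifts (G : C) (I : Set ℤ) : Set C :=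
  {Y | ∀ i ∈ I, ∀ f : (G⟦(-i : ℤ)⟧ : C) ⟶ Y, f = 0}

/-- `fd(𝒮, G) ≤ m` : `G(-∞,-1]^⊥ ⊆ ⟨G⟩^{[0,∞)}[m] = ⟨G⟩^{[-m,∞)}`. -/
def fdLE (G : C) (m : ℤ) : Prop :=
  ∀ X ∈ rPerpShifts C G (Set.Iic (-1)), X ∈ gen C G (Set.Ici (-m))

/-- `fd(𝒮ᵒᵖ, Gᵒᵖ) ≤ m`, expressed inside `𝒮`. -/
def fdOpLE (G : C) (m : ℤ) : Prop :=
  ∀ X : C, (∀ j : ℤ, j ≤ -1 → ∀ f : X ⟶ (G⟦j⟧ : C), f = 0) →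
    X ∈ gen C G (Set.Iic m)

/-- A t-structure on `C`, given by its aisle `le = 𝒮^{≤0}` and coaisle `ge = 𝒮^{≥0}`. -/
structure TStructure where
  le : Set C
  ge : Set C
  le_iso : ∀ ⦃X Y : C⦄, (X ≅ Y) → X ∈ le → Y ∈ le
  ge_iso : ∀ ⦃X Y : C⦄, (X ≅ Y) → X ∈ ge → Y ∈ ge
  le_shift : ∀ X ∈ le, (X⟦(1:ℤ)⟧ : C) ∈ le
  ge_shift : ∀ X ∈ ge, (X⟦(-1:ℤ)⟧ : C) ∈ ge
  hom_zero : ∀ X ∈ le, ∀ Y ∈ ge, ∀ f : (X⟦(1:ℤ)⟧ : C) ⟶ Y, f = 0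
  triangle : ∀ X : C, ∃ (A B : C) (_ : A ∈ le) (_ : B ∈ ge)
      (f : ((A⟦(1:ℤ)⟧ : C)) ⟶ X) (g : X ⟶ B) (h : B ⟶ ((A⟦(1:ℤ)⟧ : C)⟦(1:ℤ)⟧)),
      Triangle.mk f g h ∈ distTriang C

variable {C}

/-- bounded above: `𝒮 = ⋃ₙ 𝒮^{≤n}`. -/
def TStructure.BoundedAbove (T : TStructure C) : Prop :=
  ∀ X : C, ∃ n : ℕ, (X⟦(n : ℤ)⟧ : C) ∈ T.le

/-- bounded below: `𝒮 = ⋃ₙ 𝒮^{≥-n}`. -/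
def TStructure.BoundedBelow (T : TStructure C) : Prop :=
  ∀ X : C, ∃ n : ℕ, (X⟦(-(n : ℤ))⟧ : C) ∈ T.ge

/-- bounded t-structure. -/
def TStructure.Bounded (T : TStructure C) : Prop :=
  T.BoundedAbove ∧ T.BoundedBelow

/-- A good metric on `C`. -/
structure IsGoodMetric (M : ℕ → Set C) : Prop where
  zero_mem : ∀ n : ℕ, ∀ X : C, IsZero X → X ∈ M n
  ext : ∀ n : ℕ, star C (M n) (M n) ⊆ M n
  shift_neg : ∀ n : ℕ, ∀ X ∈ M (n+1), (X⟦(-1:ℤ)⟧ : C) ∈ M n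
  mono : ∀ n : ℕ, ∀ X ∈ M (n+1), X ∈ M n
  shift_pos : ∀ n : ℕ, ∀ X ∈ M (n+1), (X⟦(1:ℤ)⟧ : C) ∈ M n

variable (C)

/-- A chain of morphisms indexed by `ℕ`. -/
structure Chain where
  X : ℕ → C
  f : ∀ n : ℕ, X n ⟶ X (n+1)

/-- `Z` is a cone of `f : A ⟶ B`. -/
def IsConeOf {A B : C} (Z : C) (f : A ⟶ B) : Prop :=
  ∃ (g : B ⟶ Z) (h : Z ⟶ (A⟦(1:ℤ)⟧ : C)), Triangle.mk f g h ∈ distTriang C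

variable {C}

/-- Cauchy sequence with respect to a (good) metric `M`. -/
def Chain.IsCauchy (c : Chain C) (M : ℕ → Set C) : Prop :=
  ∀ i : ℕ, ∃ N : ℕ, ∀ j : ℕ, N ≤ j → ∃ Z : C, IsConeOf C Z (c.f j) ∧ Z ∈ M i


/-- A Cauchy sequence with respect to a good metric `M`, whose terms all lie
in a full subcategory `A` contained in `(M m)^⊥` (or in `^⊥(M m)`) for some `m`, is stable. -/
theorem cauchy_sequence_stable
    (C : Type u) [Category.{v} C] [HasZeroObject C] [HasShift C ℤ]
    [Preadditive C] [∀ n : ℤ, (shiftFunctor C n).Additive] [Pretriangulated C]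
    (M : ℕ → Set C) (hM : IsGoodMetric M) (A : Set C)
    (c : Chain C) (hc : c.IsCauchy M) (hmem : ∀ n : ℕ, c.X n ∈ A)
    (horth : (∃ m : ℕ, ∀ Y ∈ A, ∀ W ∈ M m, ∀ f : W ⟶ Y, f = 0) ∨
             (∃ m : ℕ, ∀ Y ∈ A, ∀ W ∈ M m, ∀ f : Y ⟶ W, f = 0)) :
    ∃ t : ℕ, ∀ n : ℕ, t ≤ n → IsIso (c.f n) := by
  obtain ⟨m, horth⟩ | ⟨m, horth⟩ := horth
  · obtain ⟨N, hN⟩ := hc (m + 1)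
    refine ⟨N, fun n hn => ?_⟩
    obtain ⟨Z, ⟨g, h, hT⟩, hZ⟩ := hN n hn
    -- h = 0 since Z⟦-1⟧ ∈ M m and X n ∈ A
    have hZ' : (Z⟦(-1:ℤ)⟧ : C) ∈ M m := hM.shift_neg m Z hZ
    have e : ((c.X n)⟦(1:ℤ)⟧⟦(-1:ℤ)⟧ : C) ≅ c.X n :=
      (shiftFunctorCompIsoId C (1:ℤ) (-1:ℤ) (by ring)).app (c.X n)
    have hmap : (shiftFunctor C (-1:ℤ)).map h ≫ e.hom = 0 :=
      horth _ (hmem n) _ hZ' _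
    have hmap0 : (shiftFunctor C (-1:ℤ)).map h = 0 := by
      rw [← Category.comp_id ((shiftFunctor C (-1:ℤ)).map h), ← e.hom_inv_id,
        ← Category.assoc, hmap, zero_comp]
    have hh : h = 0 := (shiftFunctor C (-1:ℤ)).map_injective (by simpa using hmap0)
    obtain ⟨u, hu⟩ := Triangle.coyoneda_exact₃ _ hT (𝟙 Z) (by simp [hh]; exact Limits.comp_zero)
    have hu0 : u = 0 := horth _ (hmem (n+1)) _ (hM.mono m Z hZ) u
    have hZzero : IsZero Z := (IsZero.iff_id_eq_zero Z).2 (by simp [hu, hu0]; exact Limits.zero_comp)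
    exact (Triangle.isZero₃_iff_isIso₁ _ hT).1 hZzero
  · obtain ⟨N, hN⟩ := hc (m + 1)
    refine ⟨N, fun n hn => ?_⟩
    obtain ⟨Z, ⟨g, h, hT⟩, hZ⟩ := hN n hn
    have hg : g = 0 := horth _ (hmem (n+1)) _ (hM.mono m Z hZ) g
    obtain ⟨v, hv⟩ := Triangle.yoneda_exact₃ _ hT (𝟙 Z) (by simp [hg]; exact Limits.zero_comp)
    have hZ' : (Z⟦(-1:ℤ)⟧ : C) ∈ M m := hM.shift_neg m Z hZ
    have e : ((c.X n)⟦(1:ℤ)⟧⟦(-1:ℤ)⟧ : C) ≅ c.X n :=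
      (shiftFunctorCompIsoId C (1:ℤ) (-1:ℤ) (by ring)).app (c.X n)
    have hmap : e.inv ≫ (shiftFunctor C (-1:ℤ)).map v = 0 :=
      horth _ (hmem n) _ hZ' _
    have hmap0 : (shiftFunctor C (-1:ℤ)).map v = 0 := by
      rw [← Category.id_comp ((shiftFunctor C (-1:ℤ)).map v)]; erw [← e.hom_inv_id]
      exact (Category.assoc e.hom e.inv _).trans ((congrArg (fun x => e.hom ≫ x) hmap).trans comp_zero)
    have hv0 : v = 0 := (shiftFunctor C (-1:ℤ)).map_injective (by simpa using hmap0)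
    have hZzero : IsZero Z := (IsZero.iff_id_eq_zero Z).2 (by simp [hv, hv0]; exact Limits.comp_zero)
    exact (Triangle.isZero₃_iff_isIso₁ _ hT).1 hZzero


end Paper
end

section
/- Let 𝒮 be a triangulated category with an object G such that Hom_𝒮(G[i], G) = 0 for all i ≥ d+1, where d ∈ ℕ. Then for every n ∈ ℕ, any morphism D → F in 𝒮 with D ∈ ⟨G⟩_{n+1} and F ∈ G(-∞,-1]^⊥ factors through an object of ⟨G⟩_{n+1}^{[-n(d+1),∞)}. -/
open CategoryTheory Limits Pretriangulated
open ZeroObject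

universe v u

namespace Paper

variable (C : Type u) [Category.{v} C] [HasZeroObject C] [HasShift C ℤ]
  [Preadditive C] [∀ n : ℤ, (shiftFunctor C n).Additive] [Pretriangulated C]

variable {C}

variable (C)

variable {C}

section Aux1

set_option linter.unusedSectionVars false

lemma isDirSum_zero_right (Z : C) : IsDirSum Z Z (0 : C) :=
  ⟨𝟙 Z, 0, 𝟙 Z, 0, by simp, (isZero_zero C).eq_of_src _ _, by simp, by simp, by simp⟩

lemma isDirSum_of_isZero {Z : C} (h : IsZero Z) : IsDirSum Z Z Z :=
  ⟨𝟙 Z, 𝟙 Z, 𝟙 Z, 𝟙 Z, h.eq_of_src _ _, h.eq_of_src _ _, h.eq_of_src _ _,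
    h.eq_of_src _ _, h.eq_of_src _ _⟩

lemma IsDirSum.congr_right {Z X Y Y' : C} (h : IsDirSum Z X Y) (e : Y ≅ Y') :
    IsDirSum Z X Y' := by
  obtain ⟨i₁, i₂, p₁, p₂, h₁, h₂, h₃, h₄, h₅⟩ := h
  refine ⟨i₁, e.inv ≫ i₂, p₁, p₂ ≫ e.hom, h₁, ?_, ?_, ?_, ?_⟩
  · rw [Category.assoc, ← Category.assoc i₂, h₂, Category.id_comp, Iso.inv_hom_id]
  · rw [← Category.assoc, h₃, zero_comp]
  · rw [Category.assoc, h₄, comp_zero]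
  · have : (p₂ ≫ e.hom) ≫ e.inv ≫ i₂ = p₂ ≫ i₂ := by
      rw [Category.assoc, ← Category.assoc e.hom, Iso.hom_inv_id, Category.id_comp]
    rw [this, h₅]

lemma IsDirSum.of_iso {Z Z' X Y : C} (h : IsDirSum Z X Y) (e : Z' ≅ Z) :
    IsDirSum Z' X Y := by
  obtain ⟨i₁, i₂, p₁, p₂, h₁, h₂, h₃, h₄, h₅⟩ := h
  refine ⟨i₁ ≫ e.inv, i₂ ≫ e.inv, e.hom ≫ p₁, e.hom ≫ p₂, ?_, ?_, ?_, ?_, ?_⟩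
  · rw [Category.assoc, ← Category.assoc e.inv, Iso.inv_hom_id, Category.id_comp, h₁]
  · rw [Category.assoc, ← Category.assoc e.inv, Iso.inv_hom_id, Category.id_comp, h₂]
  · rw [Category.assoc, ← Category.assoc e.inv, Iso.inv_hom_id, Category.id_comp, h₃]
  · rw [Category.assoc, ← Category.assoc e.inv, Iso.inv_hom_id, Category.id_comp, h₄]
  · have key : e.hom ≫ (p₁ ≫ i₁ + p₂ ≫ i₂) ≫ e.inv = 𝟙 Z' := by
      rw [h₅, Category.id_comp, Iso.hom_inv_id]
    rw [← key]
    simp only [Preadditive.comp_add, Preadditive.add_comp, Category.assoc]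


lemma IsDirSum.symm {Z X Y : C} (h : IsDirSum Z X Y) : IsDirSum Z Y X := by
  obtain ⟨i₁, i₂, p₁, p₂, h₁, h₂, h₃, h₄, h₅⟩ := h
  exact ⟨i₂, i₁, p₂, p₁, h₂, h₁, h₄, h₃, by rw [add_comm]; exact h₅⟩

lemma isDirSum_comb {Z X Y X₁ X₂ Y₁ Y₂ W₁ W₂ : C}
    (hZ : IsDirSum Z X Y) (hX : IsDirSum X X₁ X₂) (hY : IsDirSum Y Y₁ Y₂)
    (hW₁ : IsDirSum W₁ X₁ Y₁) (hW₂ : IsDirSum W₂ X₂ Y₂) : IsDirSum Z W₁ W₂ := by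
  obtain ⟨jX, jY, qX, qY, z₁, z₂, z₃, z₄, z₅⟩ := hZ
  obtain ⟨a₁, a₂, α₁, α₂, x₁, x₂, x₃, x₄, x₅⟩ := hX
  obtain ⟨b₁, b₂, β₁, β₂, y₁, y₂, y₃, y₄, y₅⟩ := hY
  obtain ⟨u₁, u₂, π₁, π₂, w₁, w₂, w₃, w₄, w₅⟩ := hW₁
  obtain ⟨v₁, v₂, ρ₁, ρ₂, t₁, t₂, t₃, t₄, t₅⟩ := hW₂
  refine ⟨π₁ ≫ a₁ ≫ jX + π₂ ≫ b₁ ≫ jY, ρ₁ ≫ a₂ ≫ jX + ρ₂ ≫ b₂ ≫ jY,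
      qX ≫ α₁ ≫ u₁ + qY ≫ β₁ ≫ u₂, qX ≫ α₂ ≫ v₁ + qY ≫ β₂ ≫ v₂, ?_, ?_, ?_, ?_, ?_⟩
  · simp only [Preadditive.add_comp, Preadditive.comp_add, Category.assoc,
      reassoc_of% z₁, reassoc_of% z₂, reassoc_of% z₃, reassoc_of% z₄,
      reassoc_of% x₁, reassoc_of% x₃, reassoc_of% y₁, reassoc_of% y₃,
      zero_comp, comp_zero, add_zero, zero_add, Category.comp_id, Category.id_comp]
    exact w₅
  · simp only [Preadditive.add_comp, Preadditive.comp_add, Category.assoc,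
      reassoc_of% z₁, reassoc_of% z₂, reassoc_of% z₃, reassoc_of% z₄,
      reassoc_of% x₂, reassoc_of% x₄, reassoc_of% y₂, reassoc_of% y₄,
      zero_comp, comp_zero, add_zero, zero_add, Category.comp_id, Category.id_comp]
    exact t₅
  · simp only [Preadditive.add_comp, Preadditive.comp_add, Category.assoc,
      reassoc_of% z₁, reassoc_of% z₂, reassoc_of% z₃, reassoc_of% z₄,
      reassoc_of% x₃, reassoc_of% x₄, reassoc_of% y₃, reassoc_of% y₄,
      reassoc_of% x₁, reassoc_of% x₂, reassoc_of% y₁, reassoc_of% y₂,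
      zero_comp, comp_zero, add_zero, zero_add, Category.comp_id, Category.id_comp]
  · simp only [Preadditive.add_comp, Preadditive.comp_add, Category.assoc,
      reassoc_of% z₁, reassoc_of% z₂, reassoc_of% z₃, reassoc_of% z₄,
      reassoc_of% x₃, reassoc_of% x₄, reassoc_of% y₃, reassoc_of% y₄,
      reassoc_of% x₁, reassoc_of% x₂, reassoc_of% y₁, reassoc_of% y₂,
      zero_comp, comp_zero, add_zero, zero_add, Category.comp_id, Category.id_comp]
  · have eX : qX ≫ α₁ ≫ a₁ ≫ jX + qX ≫ α₂ ≫ a₂ ≫ jX = qX ≫ jX := by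
      rw [← Preadditive.comp_add]
      congr 1
      rw [← Category.assoc, ← Category.assoc α₂, ← Preadditive.add_comp, x₅,
        Category.id_comp]
    have eY : qY ≫ β₁ ≫ b₁ ≫ jY + qY ≫ β₂ ≫ b₂ ≫ jY = qY ≫ jY := by
      rw [← Preadditive.comp_add]
      congr 1
      rw [← Category.assoc, ← Category.assoc β₂, ← Preadditive.add_comp, y₅,
        Category.id_comp]
    simp only [Preadditive.add_comp, Preadditive.comp_add, Category.assoc,
      reassoc_of% w₁, reassoc_of% w₂, reassoc_of% w₃, reassoc_of% w₄,
      reassoc_of% t₁, reassoc_of% t₂, reassoc_of% t₃, reassoc_of% t₄,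
      zero_comp, comp_zero, add_zero, zero_add, Category.comp_id, Category.id_comp]
    calc qX ≫ α₁ ≫ a₁ ≫ jX + qY ≫ β₁ ≫ b₁ ≫ jY +
          (qX ≫ α₂ ≫ a₂ ≫ jX + qY ≫ β₂ ≫ b₂ ≫ jY)
        = (qX ≫ α₁ ≫ a₁ ≫ jX + qX ≫ α₂ ≫ a₂ ≫ jX) +
          (qY ≫ β₁ ≫ b₁ ≫ jY + qY ≫ β₂ ≫ b₂ ≫ jY) := by abel
      _ = qX ≫ jX + qY ≫ jY := by rw [eX, eY]
      _ = 𝟙 Z := z₅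

lemma exists_isDirSum (A B : C) : ∃ W : C, IsDirSum W A B := by
  obtain ⟨W, a, h', hT⟩ :=
    Pretriangulated.distinguished_cocone_triangle (0 : ((B⟦(-1:ℤ)⟧ : C)) ⟶ A)
  have hT' : Triangle.mk (0 : ((B⟦(-1:ℤ)⟧ : C)) ⟶ A) a h' ∈ distTriang C := hT
  obtain ⟨p, hp⟩ : ∃ p : W ⟶ A, 𝟙 A = a ≫ p := Triangle.yoneda_exact₂ _ hT' (𝟙 A) (Category.comp_id (0 : ((B⟦(-1:ℤ)⟧ : C)) ⟶ A))
  have hp' : a ≫ p = 𝟙 A := hp.symm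
  obtain ⟨s₀, hs'⟩ : ∃ s : (((B⟦(-1:ℤ)⟧:C))⟦(1:ℤ)⟧) ⟶ W, s ≫ h' = 𝟙 _ := by
    obtain ⟨s₀, hs₀⟩ := Triangle.coyoneda_exact₃ _ (rot_of_distTriang _ hT')
      (𝟙 (((B⟦(-1:ℤ)⟧:C))⟦(1:ℤ)⟧)) ((Category.id_comp _).trans (neg_eq_zero.mpr ((shiftFunctor C (1:ℤ)).map_zero _ _)))
    exact ⟨s₀, hs₀.symm⟩
  have hah : a ≫ h' = 0 := comp_distTriang_mor_zero₂₃ _ hT'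
  have hφh : (𝟙 W - h' ≫ s₀) ≫ h' = 0 := by
    simp only [Preadditive.sub_comp, Category.id_comp, Category.assoc, hs',
      Category.comp_id, sub_self]
  obtain ⟨q₀, hq⟩ : ∃ q : W ⟶ A, 𝟙 W - h' ≫ s₀ = q ≫ a := by
    obtain ⟨q₀, hq₀⟩ := Triangle.coyoneda_exact₂ _ (rot_of_distTriang _ hT')
      (𝟙 W - h' ≫ s₀) hφh
    exact ⟨q₀, hq₀⟩
  have haφ : a ≫ (𝟙 W - h' ≫ s₀) = a := by
    simp only [Preadditive.comp_sub, Category.comp_id, ← Category.assoc, hah, zero_comp,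
      sub_zero]
  have hsφ : s₀ ≫ (𝟙 W - h' ≫ s₀) = 0 := by
    simp only [Preadditive.comp_sub, Category.comp_id, ← Category.assoc, hs',
      Category.id_comp, sub_self]
  have haq : a ≫ q₀ = 𝟙 A := by
    have h1 : (a ≫ q₀) ≫ a = a := by rw [Category.assoc, ← hq]; exact haφ
    have h2 := congrArg (fun t => t ≫ p) h1
    simpa [Category.assoc, hp'] using h2
  have hsq : s₀ ≫ q₀ = 0 := by
    have h1 : (s₀ ≫ q₀) ≫ a = 0 := by rw [Category.assoc, ← hq]; exact hsφ
    have h2 := congrArg (fun t => t ≫ p) h1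
    simpa [Category.assoc, hp'] using h2
  have hsum : q₀ ≫ a + h' ≫ s₀ = 𝟙 W := by rw [← hq]; abel
  have hW : IsDirSum W A (((B⟦(-1:ℤ)⟧:C))⟦(1:ℤ)⟧) := ⟨a, s₀, q₀, h', haq, hs', hah, hsq, hsum⟩
  exact ⟨W, hW.congr_right ((shiftFunctorCompIsoId C (-1:ℤ) (1:ℤ) (by ring)).app B)⟩

end Aux1

end Paper

namespace Paper

section Aux2

set_option linter.unusedSectionVars false

variable {C : Type u} [Category.{v} C] [HasZeroObject C] [HasShift C ℤ]
  [Preadditive C] [∀ n : ℤ, (shiftFunctor C n).Additive] [Pretriangulated C]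

lemma addClos_mono {A B : Set C} (h : A ⊆ B) {X : C} (hX : addClos C A X) :
    addClos C B X := by
  induction hX with
  | of e hY => exact .of e (h hY)
  | zero h0 => exact .zero h0
  | dirSum hX hY hs ihX ihY => exact .dirSum ihX ihY hs

lemma addClos_iso {A : Set C} {X X' : C} (e : X' ≅ X) (hX : addClos C A X) :
    addClos C A X' := by
  cases hX with
  | of e₂ hY => exact .of (e.trans e₂) hY
  | zero h0 => exact .zero (h0.of_iso e)
  | dirSum hX hY hs => exact .dirSum hX hY (hs.of_iso e)

/-- split an `addClos (A₁ ∪ A₂)` object into a direct sum. -/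
lemma addClos_split {A A₁ A₂ : Set C} (hA : A ⊆ A₁ ∪ A₂) {X : C} (hX : addClos C A X) :
    ∃ X₁ X₂, addClos C A₁ X₁ ∧ addClos C A₂ X₂ ∧ IsDirSum X X₁ X₂ := by
  induction hX with
  | of e hY =>
    rcases hA hY with h1 | h2
    · exact ⟨_, 0, .of e h1, .zero (isZero_zero C), isDirSum_zero_right _⟩
    · exact ⟨0, _, .zero (isZero_zero C), .of e h2, (isDirSum_zero_right _).symm⟩
  | zero h0 => exact ⟨_, _, .zero h0, .zero h0, isDirSum_of_isZero h0⟩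
  | dirSum hX hY hs ihX ihY =>
    obtain ⟨Xa, Xb, hXa, hXb, hXs⟩ := ihX
    obtain ⟨Ya, Yb, hYa, hYb, hYs⟩ := ihY
    obtain ⟨Wa, hWa⟩ := exists_isDirSum Xa Ya
    obtain ⟨Wb, hWb⟩ := exists_isDirSum Xb Yb
    exact ⟨Wa, Wb, .dirSum hXa hYa hWa, .dirSum hXb hYb hWb,
      isDirSum_comb hs hXs hYs hWa hWb⟩

end Aux2

end Paper

namespace Paper

section Aux3

set_option linter.unusedSectionVars false

variable {C : Type u} [Category.{v} C] [HasZeroObject C] [HasShift C ℤ]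
  [Preadditive C] [∀ n : ℤ, (shiftFunctor C n).Additive] [Pretriangulated C]

lemma shift_map_zero_iff {X Y : C} (k : ℤ) (φ : X ⟶ Y) :
    (shiftFunctor C k).map φ = 0 ↔ φ = 0 :=
  ⟨fun h => (shiftFunctor C k).map_injective (by simpa using h), fun h => by simp [h]⟩

/-- vanishing of maps between shifts of `G`. -/
lemma hom_shift_shift_zero {G : C} {d : ℕ}
    (hG : ∀ i : ℤ, (d : ℤ) + 1 ≤ i → ∀ f : (G⟦i⟧ : C) ⟶ G, f = 0)
    {j k : ℤ} (h : (d : ℤ) + 1 ≤ j - k) (φ : (G⟦j⟧ : C) ⟶ (G⟦k⟧ : C)) : φ = 0 := by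
  rw [← shift_map_zero_iff (-k)]
  have hψ : (shiftFunctorAdd' C j (-k) (j - k) (by ring)).hom.app G ≫
      (shiftFunctor C (-k)).map φ ≫
      (shiftFunctorCompIsoId C k (-k) (by ring)).hom.app G = 0 := hG _ h _
  calc (shiftFunctor C (-k)).map φ
      = (shiftFunctorAdd' C j (-k) (j - k) (by ring)).inv.app G ≫
        ((shiftFunctorAdd' C j (-k) (j - k) (by ring)).hom.app G ≫
          (shiftFunctor C (-k)).map φ ≫
          (shiftFunctorCompIsoId C k (-k) (by ring)).hom.app G) ≫
        (shiftFunctorCompIsoId C k (-k) (by ring)).inv.app G := by simp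
    _ = 0 := by rw [hψ]; simp

/-- the class `P_b = {F | Hom(G⟦j⟧, F) = 0 for j ≥ b+1}`. -/
def perp (G : C) (b : ℤ) : Set C :=
  {F | ∀ j : ℤ, b + 1 ≤ j → ∀ φ : (G⟦j⟧ : C) ⟶ F, φ = 0}

lemma perp_mono {G : C} {b b' : ℤ} (h : b ≤ b') : perp G b ⊆ perp G b' :=
  fun _ hF j hj φ => hF j (by omega) φ

lemma perp_shift {G F : C} {b : ℤ} (hF : F ∈ perp G b) :
    (F⟦(1:ℤ)⟧ : C) ∈ perp G (b + 1) := by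
  intro j hj φ
  rw [← shift_map_zero_iff (-1)]
  have hψ : (shiftFunctorAdd' C j (-1) (j - 1) (by ring)).hom.app G ≫
      (shiftFunctor C (-1)).map φ ≫
      (shiftFunctorCompIsoId C 1 (-1) (by ring)).hom.app F = 0 := hF _ (by omega) _
  calc (shiftFunctor C (-1)).map φ
      = (shiftFunctorAdd' C j (-1) (j - 1) (by ring)).inv.app G ≫
        ((shiftFunctorAdd' C j (-1) (j - 1) (by ring)).hom.app G ≫
          (shiftFunctor C (-1)).map φ ≫
          (shiftFunctorCompIsoId C 1 (-1) (by ring)).hom.app F) ≫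
        (shiftFunctorCompIsoId C 1 (-1) (by ring)).inv.app F := by simp
    _ = 0 := by rw [hψ]; simp

/-- maps from objects of `G[(-∞, -(b+1)]]` to `F ∈ P_b` vanish. -/
lemma shiftsOf_hom_zero {G F : C} {b : ℤ} (hF : F ∈ perp G b) {W : C}
    (hW : W ∈ shiftsOf C G (Set.Iic (-(b+1)))) (φ : W ⟶ F) : φ = 0 := by
  obtain ⟨i, hi, ⟨e⟩⟩ := hW
  have h0 : e.inv ≫ φ = 0 := hF (-i) (by simp only [Set.mem_Iic] at hi; omega) _
  calc φ = e.hom ≫ (e.inv ≫ φ) := by simp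
    _ = 0 := by rw [h0, comp_zero]

/-- maps from shifts `W⟦1⟧` of objects of `G[(-∞, -(b+1)]]` to `F ∈ P_{b+1}` vanish. -/
lemma shiftsOf_shift_homFrom_zero {G F : C} {b : ℤ} (hF : F ∈ perp G (b+1)) {W : C}
    (hW : W ∈ shiftsOf C G (Set.Iic (-(b+1)))) (φ : (W⟦(1:ℤ)⟧ : C) ⟶ F) : φ = 0 := by
  obtain ⟨i, hi, ⟨e⟩⟩ := hW
  simp only [Set.mem_Iic] at hi
  have h0 : (shiftFunctorAdd' C (-i) 1 (1 - i) (by ring)).hom.app G ≫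
      (shiftFunctor C (1:ℤ)).map e.inv ≫ φ = 0 := hF (1 - i) (by omega) _
  have h1 : (shiftFunctor C (1:ℤ)).map e.inv ≫ φ = 0 := by
    calc (shiftFunctor C (1:ℤ)).map e.inv ≫ φ
        = (shiftFunctorAdd' C (-i) 1 (1 - i) (by ring)).inv.app G ≫
          ((shiftFunctorAdd' C (-i) 1 (1 - i) (by ring)).hom.app G ≫
            (shiftFunctor C (1:ℤ)).map e.inv ≫ φ) := by simp
      _ = 0 := by rw [h0, comp_zero]
  calc φ = (shiftFunctor C (1:ℤ)).map e.hom ≫ ((shiftFunctor C (1:ℤ)).map e.inv ≫ φ) := by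
        rw [← Category.assoc, ← Functor.map_comp, Iso.hom_inv_id]; simp
    _ = 0 := by rw [h1, comp_zero]

/-- maps from `G⟦j⟧`, `j ≥ b+d+2`, to shifts `W⟦1⟧` of objects of `G[[-b, ∞)]` vanish. -/
lemma shiftsOf_shift_homTo_zero {G : C} {d : ℕ}
    (hG : ∀ i : ℤ, (d : ℤ) + 1 ≤ i → ∀ f : (G⟦i⟧ : C) ⟶ G, f = 0)
    {b j : ℤ} (hj : b + (d : ℤ) + 2 ≤ j) {W : C}
    (hW : W ∈ shiftsOf C G (Set.Ici (-b))) (φ : (G⟦j⟧ : C) ⟶ (W⟦(1:ℤ)⟧ : C)) : φ = 0 := by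
  obtain ⟨i, hi, ⟨e⟩⟩ := hW
  simp only [Set.mem_Ici] at hi
  have hψ : φ ≫ (shiftFunctor C (1:ℤ)).map e.hom ≫
      (shiftFunctorAdd' C (-i) 1 (1 - i) (by ring)).inv.app G = 0 :=
    hom_shift_shift_zero hG (by omega) _
  calc φ = (φ ≫ (shiftFunctor C (1:ℤ)).map e.hom ≫
        (shiftFunctorAdd' C (-i) 1 (1 - i) (by ring)).inv.app G) ≫
        (shiftFunctorAdd' C (-i) 1 (1 - i) (by ring)).hom.app G ≫
        (shiftFunctor C (1:ℤ)).map e.inv := by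
        simp only [Category.assoc, Iso.inv_hom_id_app_assoc, ← Functor.map_comp,
          Iso.hom_inv_id]
        simp
    _ = 0 := by rw [hψ, zero_comp]

end Aux3

end Paper

namespace Paper

section Aux4

set_option linter.unusedSectionVars false

variable {C : Type u} [Category.{v} C] [HasZeroObject C] [HasShift C ℤ]
  [Preadditive C] [∀ n : ℤ, (shiftFunctor C n).Additive] [Pretriangulated C]

lemma addClos_homFrom_zero {A : Set C} {F : C} {X : C} (hX : addClos C A X)
    (h : ∀ W ∈ A, ∀ ψ : W ⟶ F, ψ = 0) : ∀ φ : X ⟶ F, φ = 0 := by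
  induction hX with
  | of e hY =>
    intro φ
    have h0 : e.inv ≫ φ = 0 := h _ hY _
    calc φ = e.hom ≫ (e.inv ≫ φ) := by simp
      _ = 0 := by rw [h0, comp_zero]
  | zero h0 => intro φ; exact h0.eq_of_src _ _
  | dirSum hX hY hs ihX ihY =>
    intro φ
    obtain ⟨i₁, i₂, p₁, p₂, c₁, c₂, c₃, c₄, c₅⟩ := hs
    calc φ = (p₁ ≫ i₁ + p₂ ≫ i₂) ≫ φ := by rw [c₅, Category.id_comp]
      _ = p₁ ≫ (i₁ ≫ φ) + p₂ ≫ (i₂ ≫ φ) := by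
          rw [Preadditive.add_comp, Category.assoc, Category.assoc]
      _ = 0 := by rw [ihX (i₁ ≫ φ), ihY (i₂ ≫ φ)]; simp

lemma addClos_homTo_zero {A : Set C} {S : C} {X : C} (hX : addClos C A X)
    (h : ∀ W ∈ A, ∀ ψ : S ⟶ W, ψ = 0) : ∀ φ : S ⟶ X, φ = 0 := by
  induction hX with
  | of e hY =>
    intro φ
    have h0 : φ ≫ e.hom = 0 := h _ hY _
    calc φ = (φ ≫ e.hom) ≫ e.inv := by simp
      _ = 0 := by rw [h0, zero_comp]
  | zero h0 => intro φ; exact h0.eq_of_tgt _ _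
  | dirSum hX hY hs ihX ihY =>
    intro φ
    obtain ⟨i₁, i₂, p₁, p₂, c₁, c₂, c₃, c₄, c₅⟩ := hs
    calc φ = φ ≫ (p₁ ≫ i₁ + p₂ ≫ i₂) := by rw [c₅, Category.comp_id]
      _ = (φ ≫ p₁) ≫ i₁ + (φ ≫ p₂) ≫ i₂ := by
          rw [Preadditive.comp_add, Category.assoc, Category.assoc]
      _ = 0 := by rw [ihX (φ ≫ p₁), ihY (φ ≫ p₂)]; simp

lemma addClos_shift_homFrom_zero {A : Set C} {F : C} {X : C} (hX : addClos C A X)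
    (h : ∀ W ∈ A, ∀ ψ : (W⟦(1:ℤ)⟧ : C) ⟶ F, ψ = 0) : ∀ φ : (X⟦(1:ℤ)⟧ : C) ⟶ F, φ = 0 := by
  induction hX with
  | of e hY =>
    intro φ
    have h0 : (shiftFunctor C (1:ℤ)).map e.inv ≫ φ = 0 := h _ hY _
    calc φ = (shiftFunctor C (1:ℤ)).map e.hom ≫ ((shiftFunctor C (1:ℤ)).map e.inv ≫ φ) := by
          rw [← Category.assoc, ← Functor.map_comp, Iso.hom_inv_id]; simp
      _ = 0 := by rw [h0, comp_zero]
  | zero h0 =>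
    rename_i X0
    intro φ
    have : 𝟙 X0 = 0 := h0.eq_of_src _ _
    calc φ = (shiftFunctor C (1:ℤ)).map (𝟙 X0) ≫ φ := by simp
      _ = 0 := by rw [this, Functor.map_zero, zero_comp]
  | dirSum hX hY hs ihX ihY =>
    intro φ
    obtain ⟨i₁, i₂, p₁, p₂, c₁, c₂, c₃, c₄, c₅⟩ := hs
    have hid : (shiftFunctor C (1:ℤ)).map p₁ ≫ (shiftFunctor C (1:ℤ)).map i₁ +
        (shiftFunctor C (1:ℤ)).map p₂ ≫ (shiftFunctor C (1:ℤ)).map i₂ = 𝟙 _ := by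
      rw [← Functor.map_comp, ← Functor.map_comp, ← Functor.map_add, c₅, CategoryTheory.Functor.map_id]
    calc φ = ((shiftFunctor C (1:ℤ)).map p₁ ≫ (shiftFunctor C (1:ℤ)).map i₁ +
          (shiftFunctor C (1:ℤ)).map p₂ ≫ (shiftFunctor C (1:ℤ)).map i₂) ≫ φ := by
          rw [hid, Category.id_comp]
      _ = (shiftFunctor C (1:ℤ)).map p₁ ≫ ((shiftFunctor C (1:ℤ)).map i₁ ≫ φ) +
          (shiftFunctor C (1:ℤ)).map p₂ ≫ ((shiftFunctor C (1:ℤ)).map i₂ ≫ φ) := by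
          rw [Preadditive.add_comp, Category.assoc, Category.assoc]
      _ = 0 := by
          rw [ihX ((shiftFunctor C (1:ℤ)).map i₁ ≫ φ),
            ihY ((shiftFunctor C (1:ℤ)).map i₂ ≫ φ)]; simp

lemma addClos_shift_homTo_zero {A : Set C} {S : C} {X : C} (hX : addClos C A X)
    (h : ∀ W ∈ A, ∀ ψ : S ⟶ (W⟦(1:ℤ)⟧ : C), ψ = 0) : ∀ φ : S ⟶ (X⟦(1:ℤ)⟧ : C), φ = 0 := by
  induction hX with
  | of e hY =>
    intro φ
    have h0 : φ ≫ (shiftFunctor C (1:ℤ)).map e.hom = 0 := h _ hY _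
    calc φ = (φ ≫ (shiftFunctor C (1:ℤ)).map e.hom) ≫ (shiftFunctor C (1:ℤ)).map e.inv := by
          rw [Category.assoc, ← Functor.map_comp, Iso.hom_inv_id]; simp
      _ = 0 := by rw [h0, zero_comp]
  | zero h0 =>
    rename_i X0
    intro φ
    have : 𝟙 X0 = 0 := h0.eq_of_src _ _
    calc φ = φ ≫ (shiftFunctor C (1:ℤ)).map (𝟙 X0) := by simp
      _ = 0 := by rw [this, Functor.map_zero, comp_zero]
  | dirSum hX hY hs ihX ihY =>
    intro φ
    obtain ⟨i₁, i₂, p₁, p₂, c₁, c₂, c₃, c₄, c₅⟩ := hs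
    have hid : (shiftFunctor C (1:ℤ)).map p₁ ≫ (shiftFunctor C (1:ℤ)).map i₁ +
        (shiftFunctor C (1:ℤ)).map p₂ ≫ (shiftFunctor C (1:ℤ)).map i₂ = 𝟙 _ := by
      rw [← Functor.map_comp, ← Functor.map_comp, ← Functor.map_add, c₅, CategoryTheory.Functor.map_id]
    calc φ = φ ≫ ((shiftFunctor C (1:ℤ)).map p₁ ≫ (shiftFunctor C (1:ℤ)).map i₁ +
          (shiftFunctor C (1:ℤ)).map p₂ ≫ (shiftFunctor C (1:ℤ)).map i₂) := by
          rw [hid, Category.comp_id]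
      _ = (φ ≫ (shiftFunctor C (1:ℤ)).map p₁) ≫ (shiftFunctor C (1:ℤ)).map i₁ +
          (φ ≫ (shiftFunctor C (1:ℤ)).map p₂) ≫ (shiftFunctor C (1:ℤ)).map i₂ := by
          rw [Preadditive.comp_add, Category.assoc, Category.assoc]
      _ = 0 := by
          rw [ihX (φ ≫ (shiftFunctor C (1:ℤ)).map p₁),
            ihY (φ ≫ (shiftFunctor C (1:ℤ)).map p₂)]; simp

lemma shiftsOf_mono {G : C} {I J : Set ℤ} (h : I ⊆ J) :
    shiftsOf C G I ⊆ shiftsOf C G J := fun _ ⟨i, hi, e⟩ => ⟨i, h hi, e⟩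

lemma coprodN_mono {A B : Set C} (h : A ⊆ B) : ∀ (k : ℕ), coprodN C A k ⊆ coprodN C B k
  | 0 => fun _ hX => hX
  | 1 => fun _ hX => addClos_mono h hX
  | (k+2) => fun X hX => by
      obtain ⟨Xo, Yo, f, g, hh, h1, h2, h3⟩ := hX
      exact ⟨Xo, Yo, f, g, hh, addClos_mono h h1, coprodN_mono h (k+1) h2, h3⟩

lemma coprodN_iso {A : Set C} : ∀ (k : ℕ) {X X' : C}, (X' ≅ X) → X ∈ coprodN C A k →
    X' ∈ coprodN C A k
  | 0 => fun e hX => hX.of_iso e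
  | 1 => fun e hX => addClos_iso e hX
  | (k+2) => fun e hX => by
      obtain ⟨Xo, Yo, f, g, hh, h1, h2, h3⟩ := hX
      refine ⟨Xo, Yo, f ≫ e.inv, e.hom ≫ g, hh, h1, h2, ?_⟩
      refine isomorphic_distinguished _ h3 _ ?_
      exact Triangle.isoMk _ _ (Iso.refl _) e (Iso.refl _) (by exact (by simp : (f ≫ e.inv) ≫ e.hom = 𝟙 Xo ≫ f)) (by exact (by simp : (e.hom ≫ g) ≫ 𝟙 Yo = e.hom ≫ g)) (by exact (by simp : hh ≫ (shiftFunctor C (1:ℤ)).map (𝟙 Xo) = 𝟙 Yo ≫ hh))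

end Aux4

end Paper

namespace Paper

section Main

set_option linter.unusedSectionVars false
set_option maxHeartbeats 1000000

variable {C : Type u} [Category.{v} C] [HasZeroObject C] [HasShift C ℤ]
  [Preadditive C] [∀ n : ℤ, (shiftFunctor C n).Additive] [Pretriangulated C]

lemma shiftsOf_univ_subset_union (G : C) (b : ℤ) :
    shiftsOf C G Set.univ ⊆ shiftsOf C G (Set.Ici (-b)) ∪ shiftsOf C G (Set.Iic (-(b+1))) := by
  rintro X ⟨i, -, e⟩
  by_cases hib : -b ≤ i
  · exact Or.inl ⟨i, hib, e⟩
  · exact Or.inr ⟨i, by simp only [Set.mem_Iic]; omega, e⟩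

/-- Main approximation lemma (statement `S*(n, b)`). -/
lemma main_approx {G : C} {d : ℕ}
    (hG : ∀ i : ℤ, (d : ℤ) + 1 ≤ i → ∀ f : (G⟦i⟧ : C) ⟶ G, f = 0) :
    ∀ (n : ℕ) (b : ℤ) (Z : C), Z ∈ coprodN C (shiftsOf C G Set.univ) (n+1) →
    ∃ (E : C), E ∈ coprodN C (shiftsOf C G (Set.Ici (-(b + (n:ℤ) * ((d:ℤ)+1))))) (n+1) ∧
    ∃ v : Z ⟶ E,
      (∀ F ∈ perp G b, ∀ u : Z ⟶ F, ∃ w : E ⟶ F, v ≫ w = u) ∧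
      (∀ F ∈ perp G (b+1), ∀ e : E ⟶ F, v ≫ e = 0 → e = 0) := by
  intro n
  induction n with
  | zero =>
    intro b Z hZ
    have hset : Set.Ici (-(b + ((0:ℕ):ℤ) * ((d:ℤ)+1))) = Set.Ici (-b) := by norm_num
    rw [hset]
    obtain ⟨Z₁, Z₂, h₁, h₂, ⟨i₁, i₂, p₁, p₂, c₁, c₂, c₃, c₄, c₅⟩⟩ :=
      addClos_split (shiftsOf_univ_subset_union G b) hZ
    refine ⟨Z₁, h₁, p₁, ?_, ?_⟩
    · intro F hF u
      refine ⟨i₁ ≫ u, ?_⟩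
      have h2 : i₂ ≫ u = 0 :=
        addClos_homFrom_zero h₂ (fun W hW ψ => shiftsOf_hom_zero hF hW ψ) _
      calc p₁ ≫ i₁ ≫ u = (p₁ ≫ i₁ + p₂ ≫ i₂) ≫ u := by
            rw [Preadditive.add_comp, Category.assoc, Category.assoc, h2, comp_zero,
              add_zero]
        _ = u := by rw [c₅, Category.id_comp]
    · intro F hF e he
      calc e = (i₁ ≫ p₁) ≫ e := by rw [c₁, Category.id_comp]
        _ = i₁ ≫ (p₁ ≫ e) := by rw [Category.assoc]
        _ = 0 := by rw [he, comp_zero]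
  | succ n ih =>
    intro b Z hZ
    obtain ⟨X, Y, f, g, h, hX, hY, hT⟩ := hZ
    -- split X at cutoff b
    obtain ⟨A, B, hA, hB, ⟨i₁, i₂, p₁, p₂, c₁, c₂, c₃, c₄, c₅⟩⟩ :=
      addClos_split (shiftsOf_univ_subset_union G b) hX
    -- inner approximation of Y
    obtain ⟨E', hE', v', prop1, prop2⟩ := ih (b + (d:ℤ) + 1) Y hY
    -- A⟦1⟧ lies in perp G (b+d+1)
    have hA1 : (A⟦(1:ℤ)⟧ : C) ∈ perp G (b + (d:ℤ) + 1) := by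
      intro j hj φ
      exact addClos_shift_homTo_zero hA
        (fun W hW ψ => shiftsOf_shift_homTo_zero hG (by omega) hW ψ) φ
    -- the attaching map
    obtain ⟨ht, hht⟩ := prop1 _ hA1 (h ≫ (shiftFunctor C (1:ℤ)).map p₁)
    -- hht : v' ≫ ht = h ≫ p₁⟦1⟧
    obtain ⟨E, a, c, hTE⟩ := Pretriangulated.distinguished_cocone_triangle₂ ht
    -- complete to a morphism of triangles
    obtain ⟨v, hfv, hgv⟩ : ∃ v : Z ⟶ E, f ≫ v = p₁ ≫ a ∧ g ≫ v' = v ≫ c := by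
      obtain ⟨v₀, hv1, hv2⟩ := complete_distinguished_triangle_morphism₂
        (Triangle.mk f g h) (Triangle.mk a c ht) hT hTE p₁ v' hht.symm
      exact ⟨v₀, hv1, hv2⟩
    -- membership of E
    have hmem : E ∈ coprodN C
        (Set.Ici (-(b + ((n:ℕ)+1:ℤ) * ((d:ℤ)+1))) |> shiftsOf C G) (n+2) := by
      have hsub1 : Set.Ici (-b) ⊆ Set.Ici (-(b + ((n:ℕ)+1:ℤ) * ((d:ℤ)+1))) := by
        have h0 : (0:ℤ) ≤ ((n:ℕ)+1:ℤ) * ((d:ℤ)+1) := by positivity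
        exact Set.Ici_subset_Ici.2 (by linarith)
      have hseteq : Set.Ici (-(b + (d:ℤ) + 1 + (n:ℤ) * ((d:ℤ)+1))) =
          Set.Ici (-(b + ((n:ℕ)+1:ℤ) * ((d:ℤ)+1))) := by
        congr 1; ring
      refine ⟨A, E', a, c, ht, ?_, ?_, hTE⟩
      · exact addClos_mono (shiftsOf_mono hsub1) hA
      · rw [← hseteq]; exact hE'
    have hcast : Set.Ici (-(b + ((n+1:ℕ):ℤ) * ((d:ℤ)+1))) =
        Set.Ici (-(b + ((n:ℕ)+1:ℤ) * ((d:ℤ)+1))) := by push_cast; ring_nf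
    refine ⟨E, by rw [hcast]; exact hmem, v, ?_, ?_⟩
    · -- surjectivity
      intro F hF u
      have hi2t : i₂ ≫ (f ≫ u) = 0 :=
        addClos_homFrom_zero hB (fun W hW ψ => shiftsOf_hom_zero hF hW ψ) _
      have hpt : p₁ ≫ (i₁ ≫ f ≫ u) = f ≫ u := by
        calc p₁ ≫ (i₁ ≫ f ≫ u) = (p₁ ≫ i₁ + p₂ ≫ i₂) ≫ (f ≫ u) := by
              rw [Preadditive.add_comp, Category.assoc, Category.assoc, hi2t,
                comp_zero, add_zero]
          _ = f ≫ u := by rw [c₅, Category.id_comp]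
      -- kill the obstruction
      have hωv : v' ≫ (ht ≫ (shiftFunctor C (1:ℤ)).map (i₁ ≫ f ≫ u)) = 0 := by
        rw [← Category.assoc, hht, Category.assoc, ← Functor.map_comp, hpt]
        rw [Functor.map_comp, ← Category.assoc]
        have h31 : h ≫ (shiftFunctor C (1:ℤ)).map f = 0 := by
          exact comp_distTriang_mor_zero₃₁ _ hT
        rw [h31, zero_comp]
      have hF1 : (F⟦(1:ℤ)⟧ : C) ∈ perp G (b + (d:ℤ) + 1 + 1) :=
        perp_mono (by omega) (perp_shift hF)
      have hω : ht ≫ (shiftFunctor C (1:ℤ)).map (i₁ ≫ f ≫ u) = 0 :=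
        prop2 _ hF1 _ hωv
      -- extend over E
      obtain ⟨w₀, hw₀'⟩ : ∃ w₀ : E ⟶ F, a ≫ w₀ = i₁ ≫ f ≫ u := by
        obtain ⟨w₀, hw₀, -⟩ := complete_distinguished_triangle_morphism₂
          (Triangle.mk a c ht) (contractibleTriangle F) hTE (contractible_distinguished F)
          (i₁ ≫ f ≫ u) 0 (hω.trans zero_comp.symm)
        exact ⟨w₀, hw₀.trans (Category.comp_id _)⟩
      -- correction term
      have hfα : f ≫ (u - v ≫ w₀) = 0 := by
        rw [Preadditive.comp_sub, ← Category.assoc, hfv, Category.assoc, hw₀', hpt,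
          sub_self]
      obtain ⟨r, hr⟩ : ∃ r : Y ⟶ F, u - v ≫ w₀ = g ≫ r := by
        obtain ⟨r, hr⟩ := Triangle.yoneda_exact₂ _ hT (u - v ≫ w₀) hfα
        exact ⟨r, hr⟩
      obtain ⟨r', hr'⟩ := prop1 F (perp_mono (by omega) hF) r
      refine ⟨w₀ + c ≫ r', ?_⟩
      rw [Preadditive.comp_add, ← Category.assoc, ← hgv, Category.assoc, hr', ← hr]
      abel
    · -- injectivity
      intro F hF e hve
      have hae : a ≫ e = 0 := by
        have h1 : p₁ ≫ (a ≫ e) = 0 := by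
          rw [← Category.assoc, ← hfv, Category.assoc, hve, comp_zero]
        calc a ≫ e = (i₁ ≫ p₁) ≫ (a ≫ e) := by rw [c₁, Category.id_comp]
          _ = i₁ ≫ (p₁ ≫ (a ≫ e)) := by rw [Category.assoc]
          _ = 0 := by rw [h1, comp_zero]
      obtain ⟨e₂, he₂⟩ : ∃ e₂ : E' ⟶ F, e = c ≫ e₂ := by
        obtain ⟨e₂, he₂⟩ := Triangle.yoneda_exact₂ _ hTE e hae
        exact ⟨e₂, he₂⟩
      have hgve : g ≫ (v' ≫ e₂) = 0 := by
        rw [← Category.assoc, hgv, Category.assoc, ← he₂, hve]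
      obtain ⟨m, hm⟩ : ∃ m : ((X⟦(1:ℤ)⟧ : C)) ⟶ F, v' ≫ e₂ = h ≫ m := by
        obtain ⟨m, hm⟩ := Triangle.yoneda_exact₂ _ (rot_of_distTriang _ hT) (v' ≫ e₂)
          hgve
        exact ⟨m, hm⟩
      -- hm : v' ≫ e₂ = h ≫ m with m : X⟦1⟧ ⟶ F
      have hi2m : (shiftFunctor C (1:ℤ)).map i₂ ≫ m = 0 :=
        addClos_shift_homFrom_zero hB
          (fun W hW ψ => shiftsOf_shift_homFrom_zero hF hW ψ) _
      have hmdec : m = (shiftFunctor C (1:ℤ)).map p₁ ≫ ((shiftFunctor C (1:ℤ)).map i₁ ≫ m) := by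
        have hid : (shiftFunctor C (1:ℤ)).map p₁ ≫ (shiftFunctor C (1:ℤ)).map i₁ +
            (shiftFunctor C (1:ℤ)).map p₂ ≫ (shiftFunctor C (1:ℤ)).map i₂ = 𝟙 _ := by
          rw [← Functor.map_comp, ← Functor.map_comp, ← Functor.map_add, c₅,
            CategoryTheory.Functor.map_id]
        calc m = ((shiftFunctor C (1:ℤ)).map p₁ ≫ (shiftFunctor C (1:ℤ)).map i₁ +
              (shiftFunctor C (1:ℤ)).map p₂ ≫ (shiftFunctor C (1:ℤ)).map i₂) ≫ m := by
              rw [hid, Category.id_comp]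
          _ = (shiftFunctor C (1:ℤ)).map p₁ ≫ ((shiftFunctor C (1:ℤ)).map i₁ ≫ m) +
              (shiftFunctor C (1:ℤ)).map p₂ ≫ ((shiftFunctor C (1:ℤ)).map i₂ ≫ m) := by
              rw [Preadditive.add_comp, Category.assoc, Category.assoc]
          _ = (shiftFunctor C (1:ℤ)).map p₁ ≫ ((shiftFunctor C (1:ℤ)).map i₁ ≫ m) := by
              rw [hi2m, comp_zero, add_zero]
      have key : v' ≫ (ht ≫ ((shiftFunctor C (1:ℤ)).map i₁ ≫ m)) = h ≫ m := by
        calc v' ≫ (ht ≫ ((shiftFunctor C (1:ℤ)).map i₁ ≫ m))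
            = (v' ≫ ht) ≫ ((shiftFunctor C (1:ℤ)).map i₁ ≫ m) := by
              rw [Category.assoc]
          _ = (h ≫ (shiftFunctor C (1:ℤ)).map p₁) ≫ ((shiftFunctor C (1:ℤ)).map i₁ ≫ m) := by
              rw [hht]
          _ = h ≫ ((shiftFunctor C (1:ℤ)).map p₁ ≫ ((shiftFunctor C (1:ℤ)).map i₁ ≫ m)) := by
              simp only [Category.assoc]
          _ = h ≫ m := by rw [← hmdec]
      have hve₂ : v' ≫ (e₂ - ht ≫ ((shiftFunctor C (1:ℤ)).map i₁ ≫ m)) = 0 := by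
        rw [Preadditive.comp_sub, hm, key, sub_self]
      have he₂' : e₂ = ht ≫ ((shiftFunctor C (1:ℤ)).map i₁ ≫ m) := by
        have := prop2 F (perp_mono (by omega) hF) _ hve₂
        rwa [sub_eq_zero] at this
      have hcht : c ≫ ht = 0 := comp_distTriang_mor_zero₂₃ _ hTE
      rw [he₂, he₂', ← Category.assoc, hcht, zero_comp]

end Main

end Paper

namespace Paper

/-- If `Hom(G[i], G) = 0` for all `i ≥ d + 1`, then any morphism
`D ⟶ F` with `D ∈ ⟨G⟩_{n+1}` and `F ∈ G(-∞,-1]^⊥` factors through an object of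
`⟨G⟩_{n+1}^{[-n(d+1), ∞)}`. -/
theorem factorization_through_bounded_below_part
    (C : Type u) [Category.{v} C] [HasZeroObject C] [HasShift C ℤ]
    [Preadditive C] [∀ n : ℤ, (shiftFunctor C n).Additive] [Pretriangulated C]
    (G : C) (d : ℕ) (hG : ∀ i : ℤ, (d : ℤ) + 1 ≤ i → ∀ f : (G⟦i⟧ : C) ⟶ G, f = 0)
    (n : ℕ) (D F : C) (u : D ⟶ F)
    (hD : D ∈ genN C G Set.univ (n+1))
    (hF : F ∈ rPerpShifts C G (Set.Iic (-1))) :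
    ∃ (E : C) (v : D ⟶ E) (w : E ⟶ F), v ≫ w = u ∧
      E ∈ genN C G (Set.Ici (-((n : ℤ) * ((d : ℤ) + 1)))) (n+1) := by
  obtain ⟨Zb, Y₀, hZb, ⟨iD, iY, pD, pY, q₁, q₂, q₃, q₄, q₅⟩⟩ := hD
  have hF0 : F ∈ perp G 0 := by
    intro j hj φ
    have h1 := hF (-j) (by simp only [Set.mem_Iic]; omega)
    rw [neg_neg] at h1
    exact h1 φ
  obtain ⟨E, hE, v, prop1, -⟩ := main_approx hG n 0 Zb hZb
  obtain ⟨w, hw⟩ := prop1 F hF0 (pD ≫ u)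
  refine ⟨E, iD ≫ v, w, ?_, ?_⟩
  · rw [Category.assoc, hw, ← Category.assoc, q₁, Category.id_comp]
  · have hset : Set.Ici (-((0:ℤ) + (n:ℤ) * ((d:ℤ)+1))) =
        Set.Ici (-((n:ℤ) * ((d:ℤ)+1))) := by norm_num
    rw [hset] at hE
    exact ⟨E, 0, hE, isDirSum_zero_right E⟩

end Paper
end

section
/- Let 𝒮 be a triangulated category, G an object of 𝒮, and (𝒮^{≤0}, 𝒮^{≥0}) a bounded above t-structure on 𝒮. Then there exists r ∈ ℕ with ⟨G⟩^{(-∞,-r]} ⊆ 𝒮^{≤0}; that is, every bounded above t-structure on 𝒮 is extendable with respect to the G-good metric {⟨G⟩^{(-∞,-n]}}_{n∈ℕ}. -/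
open CategoryTheory Limits Pretriangulated

universe v u

namespace Paper

variable (C : Type u) [Category.{v} C] [HasZeroObject C] [HasShift C ℤ]
  [Preadditive C] [∀ n : ℤ, (shiftFunctor C n).Additive] [Pretriangulated C]

variable {C}

variable (C)

variable {C}

section Aux

/-- The left orthogonal of the coaisle: `{X | Hom(X, 𝒮^{≥0}) = 0}`. -/
def aisleOrth (T : TStructure C) : Set C :=
  {X | ∀ Y ∈ T.ge, ∀ f : X ⟶ Y, f = 0}

lemma orth_iso {T : TStructure C} {X X' : C} (e : X ≅ X') (h : X' ∈ aisleOrth T) :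
    X ∈ aisleOrth T := by
  intro Y hY f
  have h0 : e.inv ≫ f = 0 := h Y hY _
  calc f = e.hom ≫ (e.inv ≫ f) := by simp
  _ = 0 := by rw [h0, comp_zero]

lemma orth_zero {T : TStructure C} {X : C} (hX : IsZero X) : X ∈ aisleOrth T :=
  fun Y _ f => hX.eq_of_src f 0

lemma orth_subset_le (T : TStructure C) : aisleOrth T ⊆ T.le := by
  intro X hX
  obtain ⟨A, B, hA, hB, f, g, h, hTri⟩ := T.triangle X
  have hg : g = 0 := hX B hB g
  obtain ⟨r, hr⟩ := Triangle.yoneda_exact₃ _ hTri (𝟙 B)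
    (by change g ≫ 𝟙 B = 0; rw [hg, zero_comp])
  have hr0 : r = 0 := T.hom_zero _ (T.le_shift A hA) B hB r
  have hBzero : IsZero B := (IsZero.iff_id_eq_zero B).mpr
    (by rw [hr, hr0, comp_zero]; rfl)
  have : IsIso f := (Triangle.isZero₃_iff_isIso₁ _ hTri).mp hBzero
  exact T.le_iso (asIso f) (T.le_shift A hA)

lemma le_shift_mem_orth {T : TStructure C} {X : C} (hX : X ∈ T.le) :
    (X⟦(1:ℤ)⟧ : C) ∈ aisleOrth T :=
  fun Y hY f => T.hom_zero X hX Y hY f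

lemma orth_shift {T : TStructure C} {X : C} (hX : X ∈ aisleOrth T) :
    (X⟦(1:ℤ)⟧ : C) ∈ aisleOrth T := by
  intro Y hY f
  have h0 : (shiftShiftNeg X (1:ℤ)).inv ≫ (shiftFunctor C (-1:ℤ)).map f = 0 :=
    hX _ (T.ge_shift Y hY) _
  have h1 : (shiftFunctor C (-1:ℤ)).map f = 0 := by
    rw [← cancel_epi (shiftShiftNeg X (1:ℤ)).inv, comp_zero]; exact h0
  exact (shiftFunctor C (-1:ℤ)).map_injective (by simpa using h1)

lemma orth_shift_nonneg {T : TStructure C} {X : C} (hX : X ∈ aisleOrth T)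
    (k : ℤ) (hk : 0 ≤ k) : (X⟦k⟧ : C) ∈ aisleOrth T :=
  Int.le_induction (motive := fun k _ => (X⟦k⟧ : C) ∈ aisleOrth T)
    (orth_iso (shiftZero ℤ X) hX)
    (fun k _ ih => orth_iso (shiftAdd X k 1) (orth_shift ih)) k hk

lemma orth_ext {T : TStructure C} {X Z Y : C} (f : X ⟶ Z) (g : Z ⟶ Y)
    (h : Y ⟶ (X⟦(1:ℤ)⟧ : C)) (hTri : Triangle.mk f g h ∈ distTriang C)
    (hX : X ∈ aisleOrth T) (hY : Y ∈ aisleOrth T) : Z ∈ aisleOrth T := by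
  intro W hW φ
  have h0 : f ≫ φ = 0 := hX W hW _
  obtain ⟨ψ, hψ⟩ := Triangle.yoneda_exact₂ _ hTri φ h0
  rw [hψ, hY W hW ψ]; exact comp_zero

lemma orth_dirSum {T : TStructure C} {Z X Y : C} (h : IsDirSum Z X Y)
    (hX : X ∈ aisleOrth T) (hY : Y ∈ aisleOrth T) : Z ∈ aisleOrth T := by
  intro W hW f
  obtain ⟨i₁, i₂, p₁, p₂, _, _, _, _, h5⟩ := h
  have e1 : i₁ ≫ f = 0 := hX W hW _
  have e2 : i₂ ≫ f = 0 := hY W hW _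
  calc f = 𝟙 Z ≫ f := by rw [Category.id_comp]
  _ = (p₁ ≫ i₁ + p₂ ≫ i₂) ≫ f := by rw [h5]
  _ = p₁ ≫ (i₁ ≫ f) + p₂ ≫ (i₂ ≫ f) := by
        rw [Preadditive.add_comp, Category.assoc, Category.assoc]
  _ = 0 := by rw [e1, e2, comp_zero, comp_zero, add_zero]

lemma orth_smd {T : TStructure C} {Z X Y : C} (h : IsDirSum Z X Y)
    (hZ : Z ∈ aisleOrth T) : X ∈ aisleOrth T := by
  intro W hW f
  obtain ⟨i₁, i₂, p₁, p₂, h1, _, _, _, _⟩ := h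
  have e1 : p₁ ≫ f = 0 := hZ W hW _
  calc f = 𝟙 X ≫ f := by rw [Category.id_comp]
  _ = i₁ ≫ (p₁ ≫ f) := by rw [← h1, Category.assoc]
  _ = 0 := by rw [e1, comp_zero]

lemma addClos_subset_orth {T : TStructure C} {A : Set C} (hA : A ⊆ aisleOrth T)
    {X : C} (h : addClos C A X) : X ∈ aisleOrth T := by
  induction h with
  | of e hY => exact orth_iso e (hA hY)
  | zero hX => exact orth_zero hX
  | dirSum hX hY hd ihX ihY => exact orth_dirSum hd ihX ihY

lemma coprodN_subset_orth {T : TStructure C} {A : Set C} (hA : A ⊆ aisleOrth T) :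
    ∀ n : ℕ, coprodN C A n ⊆ aisleOrth T := by
  intro n
  induction n with
  | zero => exact fun X hX => orth_zero hX
  | succ n ih =>
    cases n with
    | zero => exact fun X hX => addClos_subset_orth hA hX
    | succ m =>
      rintro Z ⟨X, Y, f, g, h, hX, hY, hTri⟩
      exact orth_ext f g h hTri (addClos_subset_orth hA hX) (ih hY)

lemma gen_subset_orth {T : TStructure C} {G : C} {I : Set ℤ}
    (hA : shiftsOf C G I ⊆ aisleOrth T) : gen C G I ⊆ aisleOrth T := by
  rintro X ⟨n, Z, Y, hZ, hd⟩
  exact orth_smd hd (coprodN_subset_orth hA (n + 1) hZ)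

end Aux

/-- Every bounded above t-structure is extendable with respect to the
`G`-good metric `{⟨G⟩^{(-∞,-n]}}ₙ` : there is `r ∈ ℕ` with `⟨G⟩^{(-∞,-r]} ⊆ 𝒮^{≤0}`. -/
theorem bounded_above_tstructure_extendable
    (C : Type u) [Category.{v} C] [HasZeroObject C] [HasShift C ℤ]
    [Preadditive C] [∀ n : ℤ, (shiftFunctor C n).Additive] [Pretriangulated C]
    (G : C) (T : TStructure C) (hT : T.BoundedAbove) :
    ∃ r : ℕ, gen C G (Set.Iic (-(r : ℤ))) ⊆ T.le := by
  obtain ⟨n, hn⟩ := hT G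
  refine ⟨n + 1, fun X hX => orth_subset_le T (gen_subset_orth ?_ hX)⟩
  rintro W ⟨i, hi, ⟨e⟩⟩
  refine orth_iso e ?_
  have hi' : i ≤ -((n:ℤ) + 1) := by
    simpa using hi
  have hbase : ((G⟦(n:ℤ)⟧)⟦(1:ℤ)⟧ : C) ∈ aisleOrth T := le_shift_mem_orth hn
  have hk : (0:ℤ) ≤ -i - ((n:ℤ) + 1) := by omega
  have hmem : ((G⟦(n:ℤ)⟧)⟦(1:ℤ)⟧⟦-i - ((n:ℤ) + 1)⟧ : C) ∈ aisleOrth T :=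
    orth_shift_nonneg hbase _ hk
  refine orth_iso ?_ hmem
  have h1 : (-i : ℤ) = ((n:ℤ) + 1) + (-i - ((n:ℤ) + 1)) := by omega
  calc (G⟦(-i : ℤ)⟧ : C) ≅ G⟦((n:ℤ) + 1) + (-i - ((n:ℤ) + 1))⟧ := eqToIso (by rw [← h1])
  _ ≅ (G⟦(n:ℤ) + 1⟧)⟦-i - ((n:ℤ) + 1)⟧ := shiftAdd G _ _
  _ ≅ ((G⟦(n:ℤ)⟧)⟦(1:ℤ)⟧)⟦-i - ((n:ℤ) + 1)⟧ :=
      (shiftFunctor C (-i - ((n:ℤ) + 1))).mapIso (shiftAdd G (n:ℤ) 1)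


end Paper
end

section
/- Let 𝒮 be an essentially small triangulated category with a good metric ℳ, and let (𝒮^{≤0}, 𝒮^{≥0}) be a t-structure on 𝒮 that is extendable with respect to ℳ (i.e. ℳ_k ⊆ 𝒮^{≤0} for some k ∈ ℕ). Let ℛ be any full subcategory of 𝒮^{≥0}. Then the essential image of ℛ under the Yoneda functor equals 𝔖(ℛ): (i) 𝔶(X) ∈ 𝔖(ℛ) for every X ∈ ℛ, and (ii) every F ∈ 𝔖(ℛ) is isomorphic in 𝒮-Mod to 𝔶(X) for some X ∈ ℛ. -/
open CategoryTheory Limits Pretriangulated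

universe v u

namespace Paper

variable (C : Type u) [Category.{v} C] [HasZeroObject C] [HasShift C ℤ]
  [Preadditive C] [∀ n : ℤ, (shiftFunctor C n).Additive] [Pretriangulated C]

variable {C}

variable (C)

variable {C}

section Completion

variable (C : Type) [SmallCategory C] [HasZeroObject C] [HasShift C ℤ]
  [Preadditive C] [∀ n : ℤ, (shiftFunctor C n).Additive] [Pretriangulated C]

/-- `F ∈ 𝔏(𝒜)` : `F` is a colimit in `𝒮-Mod` of the Yoneda image of a Cauchy
sequence (with respect to the metric `M`) whose terms lie in `𝒜`. -/
noncomputable def memL (M : ℕ → Set C) (A : Set C) (F : Cᵒᵖ ⥤ AddCommGrpCat) : Prop :=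
  ∃ c : Chain C, c.IsCauchy M ∧ (∀ n, c.X n ∈ A) ∧
    Nonempty (F ≅ colimit (Functor.ofSequence c.f ⋙ preadditiveYoneda))

/-- `F ∈ 𝔠(𝒮)` : `F` vanishes on `ℳⱼ` for some `j`. -/
def memC (M : ℕ → Set C) (F : Cᵒᵖ ⥤ AddCommGrpCat) : Prop :=
  ∃ j : ℕ, ∀ W ∈ M j, IsZero (F.obj (Opposite.op W))

/-- `F ∈ 𝔖(𝒜) := 𝔏(𝒜) ∩ 𝔠(𝒮)`. -/
noncomputable def memS (M : ℕ → Set C) (A : Set C) (F : Cᵒᵖ ⥤ AddCommGrpCat) : Prop :=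
  memL C M A F ∧ memC C M F

end Completion


section AuxEvIso


section EvIso

variable {D : Type*} [Category D] (G : ℕ ⥤ D)

lemma isIso_map_of_le (N : ℕ)
    (h : ∀ n, N ≤ n → IsIso (G.map (homOfLE (Nat.le_succ n)))) :
    ∀ (n : ℕ) (hn : N ≤ n), IsIso (G.map (homOfLE hn)) := by
  intro n hn
  induction n, hn using Nat.le_induction with
  | base =>
      rw [show homOfLE (le_refl N) = 𝟙 N from Subsingleton.elim _ _, G.map_id]
      infer_instance
  | succ n hn ih =>
      rw [show homOfLE (by omega : N ≤ n + 1) =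
        homOfLE hn ≫ homOfLE (Nat.le_succ n) from Subsingleton.elim _ _, G.map_comp]
      exact @IsIso.comp_isIso _ _ _ _ _ _ _ ih (h n hn)

/-- colimit of a sequence which is eventually isomorphisms. -/
noncomputable def colimitIsoOfEventuallyIso [HasColimit G] (N : ℕ)
    (h : ∀ n, N ≤ n → IsIso (G.map (homOfLE (Nat.le_succ n)))) :
    colimit G ≅ G.obj N := by
  have hiso := isIso_map_of_le G N h
  let φ : ∀ n, G.obj n ⟶ G.obj N := fun n =>
    if hn : n ≤ N then G.map (homOfLE hn)
    else
      haveI := hiso n (le_of_not_ge hn)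
      inv (G.map (homOfLE (le_of_not_ge hn)))
  have hφ : ∀ (n m : ℕ) (hnm : n ≤ m), G.map (homOfLE hnm) ≫ φ m = φ n := by
    intro n m hnm
    by_cases hm : m ≤ N
    · rw [show φ m = G.map (homOfLE hm) from dif_pos hm,
        show φ n = G.map (homOfLE (hnm.trans hm)) from dif_pos (hnm.trans hm),
        ← G.map_comp]
      congr 1
    · haveI := hiso m (le_of_not_ge hm)
      rw [show φ m = inv (G.map (homOfLE (le_of_not_ge hm))) from dif_neg hm,
        IsIso.comp_inv_eq]
      by_cases hn : n ≤ N
      · rw [show φ n = G.map (homOfLE hn) from dif_pos hn, ← G.map_comp]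
        congr 1
      · haveI := hiso n (le_of_not_ge hn)
        rw [show φ n = inv (G.map (homOfLE (le_of_not_ge hn))) from dif_neg hn,
          IsIso.eq_inv_comp, ← G.map_comp]
        congr 1
  have hφN : φ N = 𝟙 (G.obj N) := by
    rw [show φ N = G.map (homOfLE (le_refl N)) from dif_pos (le_refl N),
      show homOfLE (le_refl N) = 𝟙 N from Subsingleton.elim _ _, G.map_id]
  refine ⟨colimit.desc G ⟨G.obj N, ⟨φ, ?_⟩⟩, colimit.ι G N, ?_, ?_⟩
  · intro n m f
    have := hφ n m (leOfHom f)
    rw [show homOfLE (leOfHom f) = f from Subsingleton.elim _ _] at this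
    simpa using this
  · apply colimit.hom_ext
    intro n
    rw [colimit.ι_desc_assoc, Category.comp_id]
    dsimp only
    by_cases hn : n ≤ N
    · rw [show φ n = G.map (homOfLE hn) from dif_pos hn, colimit.w]
    · haveI := hiso n (le_of_not_ge hn)
      rw [show φ n = inv (G.map (homOfLE (le_of_not_ge hn))) from dif_neg hn,
        IsIso.inv_comp_eq, colimit.w]
  · rw [colimit.ι_desc]
    exact hφN

end EvIso


end AuxEvIso

/-- (Lifting, part of Theorem ET.)  Let `(𝒮^{≤0}, 𝒮^{≥0})` be a
t-structure on `𝒮` extendable with respect to a good metric `M`, and let `ℛ ⊆ 𝒮^{≥0}` be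
any full subcategory.  Then the essential image of `ℛ` under the Yoneda functor equals
`𝔖(ℛ)`. -/
theorem yoneda_image_eq_S_of_extendable
    (C : Type) [SmallCategory C] [HasZeroObject C] [HasShift C ℤ]
    [Preadditive C] [∀ n : ℤ, (shiftFunctor C n).Additive] [Pretriangulated C]
    (M : ℕ → Set C) (hM : IsGoodMetric M)
    (T : TStructure C) (hext : ∃ k : ℕ, M k ⊆ T.le)
    (R : Set C) (hR : R ⊆ T.ge) :
    (∀ X ∈ R, memS C M R (preadditiveYoneda.obj X)) ∧
    (∀ F : Cᵒᵖ ⥤ AddCommGrpCat, memS C M R F → ∃ X ∈ R, Nonempty (F ≅ preadditiveYoneda.obj X)) := by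
  classical
  obtain ⟨k, hk⟩ := hext
  -- monotonicity of the metric
  have hMle : ∀ {a b : ℕ}, a ≤ b → ∀ X ∈ M b, X ∈ M a := by
    intro a b hab X hX
    obtain ⟨d, rfl⟩ := Nat.exists_eq_add_of_le hab
    induction d with
    | zero => exact hX
    | succ d ih => exact ih (Nat.le_add_right a d) (hM.mono _ X hX)
  -- key vanishing : Hom(W, Y) = 0 for W ∈ M (k+1) and Y ∈ T.ge
  have key : ∀ (W : C), W ∈ M (k+1) → ∀ Y ∈ T.ge, ∀ (f : W ⟶ Y), f = 0 := by
    intro W hW Y hY f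
    have h1 : (W⟦(-1:ℤ)⟧ : C) ∈ M k := hM.shift_neg k W hW
    have h2 := T.hom_zero _ (hk h1) Y hY ((shiftNegShift W (1:ℤ)).hom ≫ f)
    calc f = (shiftNegShift W (1:ℤ)).inv ≫ ((shiftNegShift W (1:ℤ)).hom ≫ f) := by simp
    _ = 0 := by rw [h2, comp_zero]
  constructor
  · -- part (i)
    intro X hX
    constructor
    · refine ⟨⟨fun _ => X, fun _ => 𝟙 X⟩, ?_, fun _ => hX, ?_⟩
      · intro i
        refine ⟨0, fun j _ => ⟨(contractibleTriangle X).obj₃,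
          ⟨(contractibleTriangle X).mor₂, (contractibleTriangle X).mor₃,
            contractible_distinguished X⟩,
          hM.zero_mem i _ (isZero_zero C)⟩⟩
      · refine ⟨(colimitIsoOfEventuallyIso
          (Functor.ofSequence (fun _ : ℕ => 𝟙 X) ⋙ preadditiveYoneda) 0 ?_).symm⟩
        intro n _
        rw [Functor.comp_map,
          show homOfLE (Nat.le_succ n) = homOfLE (Nat.le_add_right n 1) from rfl,
          Functor.ofSequence_map_homOfLE_succ]
        exact (preadditiveYoneda.mapIso (Iso.refl X)).isIso_hom
    · refine ⟨k+1, fun W hW => ?_⟩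
      have hz : ∀ (f : W ⟶ X), f = 0 := key W hW X (hR hX)
      have : Subsingleton ((preadditiveYoneda.obj X).obj (Opposite.op W)) := by
        constructor
        intro a b
        have ha : (a : W ⟶ X) = 0 := hz a
        have hb : (b : W ⟶ X) = 0 := hz b
        exact ha.trans hb.symm
      exact AddCommGrpCat.isZero_of_subsingleton _
  · -- part (ii)
    rintro F ⟨⟨c, hc, hmem, ⟨e⟩⟩, j₀, hj₀⟩
    obtain ⟨N, hN⟩ := hc (max (k+2) j₀)
    set G := Functor.ofSequence c.f ⋙ preadditiveYoneda with hG
    -- data of the triangles, with vanishing third map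
    have hdata : ∀ j, N ≤ j → ∃ (Z : C) (g : c.X (j+1) ⟶ Z) (h : Z ⟶ ((c.X j)⟦(1:ℤ)⟧ : C)),
        Triangle.mk (c.f j) g h ∈ (distTriang C) ∧ h = 0 ∧ Z ∈ M j₀ := by
      intro j hj
      obtain ⟨Z, ⟨g, h, hT⟩, hZ⟩ := hN j hj
      refine ⟨Z, g, h, hT, ?_, hMle (le_max_right _ _) Z hZ⟩
      have hZk2 : Z ∈ M (k+2) := hMle (le_max_left _ _) Z hZ
      have h1 : (Z⟦(-1:ℤ)⟧ : C) ∈ M (k+1) := hM.shift_neg _ Z hZk2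
      apply (shiftFunctor C (-1:ℤ)).map_injective
      rw [Functor.map_zero]
      have h2 := key _ h1 _ (hR (hmem j))
        ((shiftFunctor C (-1:ℤ)).map h ≫ (shiftShiftNeg (c.X j) (1:ℤ)).hom)
      calc (shiftFunctor C (-1:ℤ)).map h
          = ((shiftFunctor C (-1:ℤ)).map h ≫ (shiftShiftNeg (c.X j) (1:ℤ)).hom) ≫
              (shiftShiftNeg (c.X j) (1:ℤ)).inv := by rw [Category.assoc, Iso.hom_inv_id, Category.comp_id]
        _ = 0 := by rw [h2, zero_comp]
    -- retractions
    have hret : ∀ j, N ≤ j → ∃ r : c.X (j+1) ⟶ c.X j, c.f j ≫ r = 𝟙 (c.X j) := by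
      intro j hj
      obtain ⟨Z, g, h, hT, hh, _⟩ := hdata j hj
      obtain ⟨r, hr⟩ := Triangle.yoneda_exact₂ _
        (inv_rot_of_distTriang _ hT) (𝟙 (c.X j)) (by
          erw [hh, Category.comp_id]
          exact (by rw [Functor.map_zero]; simp :
            -(shiftFunctor C (-1:ℤ)).map (0 : Z ⟶ (c.X j)⟦(1:ℤ)⟧) ≫
              (shiftFunctorCompIsoId C (1:ℤ) (-1) (by omega)).hom.app (c.X j) = 0))
      exact ⟨r, hr.symm⟩
    -- left inverses of the transition maps
    have hretc : ∀ (a m : ℕ) (hm : a ≤ m), N ≤ a →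
        ∃ ψ : c.X m ⟶ c.X a, (Functor.ofSequence c.f).map (homOfLE hm) ≫ ψ = 𝟙 (c.X a) := by
      intro a m hm ha
      induction m, hm using Nat.le_induction with
      | base =>
          refine ⟨𝟙 _, ?_⟩
          rw [show homOfLE (le_refl a) = 𝟙 a from Subsingleton.elim _ _]
          simp only [CategoryTheory.Functor.map_id]; exact Category.comp_id _
      | succ m hm ih =>
          obtain ⟨ψ, hψ⟩ := ih
          obtain ⟨r, hr⟩ := hret m (ha.trans hm)
          refine ⟨r ≫ ψ, ?_⟩
          rw [show homOfLE (by omega : a ≤ m+1) =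
              homOfLE hm ≫ homOfLE (Nat.le_add_right m 1) from Subsingleton.elim _ _,
            Functor.map_comp, Functor.ofSequence_map_homOfLE_succ]
          erw [Category.assoc, ← Category.assoc (c.f m), hr, Category.id_comp, hψ]
    -- the transition maps are eventually isomorphisms
    have hiso : ∀ j, N ≤ j → IsIso (c.f j) := by
      intro j hj
      obtain ⟨Z, g, h, hT, hh, hZj₀⟩ := hdata j hj
      obtain ⟨s, hs⟩ := Triangle.coyoneda_exact₃ _ hT (𝟙 Z) (by rw [hh]; exact comp_zero)
      dsimp only [Triangle.mk] at s hs
      -- show s = 0 by a colimit argument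
      have hFZ : IsZero (F.obj (Opposite.op Z)) := hj₀ Z hZj₀
      have hczero : IsZero ((colimit G).obj (Opposite.op Z)) :=
        hFZ.of_iso (e.app (Opposite.op Z)).symm
      set G' := G ⋙ (evaluation Cᵒᵖ AddCommGrpCat).obj (Opposite.op Z) with hG'
      have hG'zero : IsZero (colimit G') :=
        hczero.of_iso (colimitObjIsoColimitCompEvaluation G (Opposite.op Z)).symm
      let x : ↑(G'.obj (j+1)) := (s : Z ⟶ c.X (j+1))
      have hx : colimit.ι G' (j+1) x = 0 := by
        rw [show colimit.ι G' (j+1) = 0 from hG'zero.eq_of_tgt _ _]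
        rfl
      obtain ⟨m, fm, hfm⟩ : ∃ (m : ℕ) (fm : j+1 ⟶ m), G'.map fm x = 0 := by
        rw [show (0 : ToType (colimit G')) = colimit.ι G' (j+1) 0 by simp,
          Concrete.colimit_rep_eq_iff_exists] at hx
        obtain ⟨m, f, g, h⟩ := hx
        exact ⟨m, f, h.trans (by simp)⟩
      have hsm : s ≫ (Functor.ofSequence c.f).map fm = 0 := by exact hfm
      obtain ⟨ψ, hψ⟩ := hretc (j+1) m (leOfHom fm) (Nat.le_succ_of_le hj)
      have hs0 : s = 0 := by
        calc s = s ≫ ((Functor.ofSequence c.f).map (homOfLE (leOfHom fm)) ≫ ψ) := by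
              erw [hψ, Category.comp_id]
          _ = (s ≫ (Functor.ofSequence c.f).map (homOfLE (leOfHom fm))) ≫ ψ := by
              erw [Category.assoc]
          _ = 0 := by
              erw [show homOfLE (leOfHom fm) = fm from Subsingleton.elim _ _, hsm, zero_comp]
      have hZzero : IsZero Z := by
        rw [IsZero.iff_id_eq_zero, hs, hs0, zero_comp]
      exact (Triangle.isZero₃_iff_isIso₁ _ hT).1 hZzero
    refine ⟨c.X N, hmem N, ⟨e.trans (colimitIsoOfEventuallyIso G N ?_)⟩⟩
    intro n hn
    rw [hG, Functor.comp_map,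
      show homOfLE (Nat.le_succ n) = homOfLE (Nat.le_add_right n 1) from rfl,
      Functor.ofSequence_map_homOfLE_succ]
    haveI := hiso n hn
    exact (preadditiveYoneda.mapIso (asIso (c.f n))).isIso_hom


end Paper
end

section
/- Let 𝒮 be an essentially small triangulated category with a t-structure (𝒮^{≤0}, 𝒮^{≥0}) and a good metric ℳ that is equivalent to the good metric {𝒮^{≤-n}}_{n∈ℕ} (for every n there exist a, b ∈ ℕ with ℳ_a ⊆ 𝒮^{≤-n} and 𝒮^{≤-b} ⊆ ℳ_n). Then the Yoneda functor restricts to an equivalence from 𝒮^{+} := ⋃_n 𝒮^{≥-n} onto the completion 𝔖(𝒮): 𝔶(X) ∈ 𝔖(𝒮) for every X ∈ 𝒮^{+}, and every F ∈ 𝔖(𝒮) is isomorphic in 𝒮-Mod to 𝔶(X) for some X ∈ 𝒮^{+}. In particular, if the t-structure is bounded below, then 𝔶 induces an equivalence 𝒮 ≃ 𝔖(𝒮). -/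
open CategoryTheory Limits Pretriangulated

universe v u

namespace Paper

variable (C : Type u) [Category.{v} C] [HasZeroObject C] [HasShift C ℤ]
  [Preadditive C] [∀ n : ℤ, (shiftFunctor C n).Additive] [Pretriangulated C]

variable {C}

variable (C)

variable {C}

section HelpersPaper

variable {C : Type u} [Category.{v} C] [HasZeroObject C] [HasShift C ℤ]
  [Preadditive C] [∀ n : ℤ, (shiftFunctor C n).Additive] [Pretriangulated C]

/-- Composite shift isomorphism. -/
noncomputable def shsh (X : C) (i j k : ℤ) (h : i + j = k) : ((X⟦i⟧)⟦j⟧ : C) ≅ X⟦k⟧ :=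
  (shiftFunctorAdd' C i j k h).symm.app X

/-- Shift isomorphism along an equality of integers. -/
def shiftCongr (X : C) {i j : ℤ} (h : i = j) : (X⟦i⟧ : C) ≅ X⟦j⟧ := eqToIso (by rw [h])

lemma TStructure.le_up (T : TStructure C) {X : C} {e : ℤ} (hX : (X⟦e⟧ : C) ∈ T.le)
    {e' : ℤ} (h : e ≤ e') : (X⟦e'⟧ : C) ∈ T.le := by
  have key : ∀ n : ℕ, (X⟦e + (n : ℤ)⟧ : C) ∈ T.le := by
    intro n
    induction n with
    | zero => exact T.le_iso (shiftCongr X (by simp)) hX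
    | succ n ih =>
      exact T.le_iso (shsh X (e + (n : ℤ)) 1 (e + ((n+1 : ℕ) : ℤ)) (by push_cast; ring))
        (T.le_shift _ ih)
  have := key (e' - e).toNat
  exact T.le_iso (shiftCongr X (by omega)) this

lemma TStructure.ge_down (T : TStructure C) {X : C} {e : ℤ} (hX : (X⟦e⟧ : C) ∈ T.ge)
    {e' : ℤ} (h : e' ≤ e) : (X⟦e'⟧ : C) ∈ T.ge := by
  have key : ∀ n : ℕ, (X⟦e - (n : ℤ)⟧ : C) ∈ T.ge := by
    intro n
    induction n with
    | zero => exact T.ge_iso (shiftCongr X (by simp)) hX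
    | succ n ih =>
      exact T.ge_iso (shsh X (e - (n : ℤ)) (-1) (e - ((n+1 : ℕ) : ℤ)) (by push_cast; ring))
        (T.ge_shift _ ih)
  have := key (e - e').toNat
  exact T.ge_iso (shiftCongr X (by omega)) this

/-- Maps from connective to coconnective objects vanish. -/
lemma TStructure.vanish (T : TStructure C) {W Y : C} {e d : ℤ}
    (hW : (W⟦-e⟧ : C) ∈ T.le) (hY : (Y⟦-d⟧ : C) ∈ T.ge) (hde : d < e)
    (f : W ⟶ Y) : f = 0 := by
  have h1 : (W⟦-(d+1)⟧ : C) ∈ T.le := T.le_up hW (by omega)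
  set f' := (shiftFunctor C (-d)).map f with hf'
  have e1 : ((W⟦-(d+1)⟧ : C)⟦(1:ℤ)⟧ : C) ≅ (W⟦-d⟧ : C) := shsh W (-(d+1)) 1 (-d) (by ring)
  have hz : e1.hom ≫ f' = 0 := T.hom_zero _ h1 _ hY _
  have hf0 : f' = 0 := by
    rw [← Iso.inv_hom_id_assoc e1 f', hz, Limits.comp_zero]
  exact (shiftFunctor C (-d)).map_injective (by rw [← hf', hf0, Functor.map_zero])

/-- Truncation triangles coming from the `t`-structure. -/
lemma TStructure.trunc (T : TStructure C) (d : ℤ) (E : C) :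
    ∃ (P Q : C) (u : P ⟶ E) (p : E ⟶ Q) (w : Q ⟶ (P⟦(1:ℤ)⟧ : C)),
      ((P⟦-(d+2)⟧ : C) ∈ T.le) ∧ ((Q⟦-(d+1)⟧ : C) ∈ T.ge) ∧
      Triangle.mk u p w ∈ distTriang C := by
  obtain ⟨A, B, hA, hB, f, g, h, hT⟩ := T.triangle (E⟦-(d+1)⟧)
  have hS := Pretriangulated.Triangle.shift_distinguished _ hT (d+1)
  set Δ := (CategoryTheory.shiftFunctor (Triangle C) (d+1)).obj (Triangle.mk f g h) with hΔ
  have e2 : ((E⟦-(d+1)⟧ : C)⟦(d+1:ℤ)⟧ : C) ≅ E :=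
    shsh E (-(d+1)) (d+1) 0 (by ring) ≪≫ (shiftFunctorZero C ℤ).app E
  refine ⟨(A⟦(1:ℤ)⟧ : C)⟦(d+1:ℤ)⟧, (B⟦(d+1:ℤ)⟧ : C), Δ.mor₁ ≫ e2.hom, e2.inv ≫ Δ.mor₂,
    Δ.mor₃, ?_, ?_, ?_⟩
  · exact T.le_iso
      ((shsh (A⟦(1:ℤ)⟧) (d+1) (-(d+2)) (-1) (by ring)) ≪≫ shsh A 1 (-1) 0 (by ring) ≪≫
        (shiftFunctorZero C ℤ).app A).symm hA
  · exact T.ge_iso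
      ((shsh B (d+1) (-(d+1)) 0 (by ring)) ≪≫ (shiftFunctorZero C ℤ).app B).symm hB
  · refine Pretriangulated.isomorphic_distinguished _ hS _ ?_
    exact Triangle.isoMk _ _ (Iso.refl _) e2.symm (Iso.refl _)
      ((Category.assoc _ _ _).trans ((congrArg (fun t => Δ.mor₁ ≫ t) e2.hom_inv_id).trans
        ((Category.comp_id _).trans (Category.id_comp _).symm))) (Category.comp_id _)
      ((congrArg (CategoryStruct.comp Δ.mor₃) (CategoryTheory.Functor.map_id _ _)).trans
        ((Category.comp_id _).trans (Category.id_comp _).symm))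

end HelpersPaper



section MainProof

variable {C : Type} [SmallCategory C] [HasZeroObject C] [HasShift C ℤ]
  [Preadditive C] [∀ n : ℤ, (shiftFunctor C n).Additive] [Pretriangulated C]

lemma partA (M : ℕ → Set C) (hM : IsGoodMetric M) (T : TStructure C)
    (hequiv : ∀ n : ℕ, (∃ a : ℕ, ∀ X ∈ M a, (X⟦(-(n : ℤ))⟧ : C) ∈ T.le) ∧
      (∃ b : ℕ, ∀ X : C, (X⟦(-(b : ℤ))⟧ : C) ∈ T.le → X ∈ M n))
    (X : C) (hX : ∃ n : ℕ, (X⟦(-(n : ℤ))⟧ : C) ∈ T.ge) :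
    memS C M Set.univ (preadditiveYoneda.obj X) := by
  obtain ⟨n, hXn⟩ := hX
  constructor
  · -- memL via the constant chain
    refine ⟨⟨fun _ => X, fun _ => 𝟙 X⟩, ?_, fun _ => Set.mem_univ _, ?_⟩
    · intro i
      refine ⟨0, fun j _ => ⟨(contractibleTriangle X).obj₃,
        ⟨(contractibleTriangle X).mor₂, (contractibleTriangle X).mor₃, ?_⟩,
        hM.zero_mem i _ ?_⟩⟩
      · exact Pretriangulated.contractible_distinguished X
      · exact Limits.isZero_zero C
    · -- the colimit of the constant sequence is `yoneda X`
      have hmap' : ∀ (m m' : ℕ) (h : m ≤ m'),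
          (Functor.ofSequence (fun _ => 𝟙 X : ∀ _ : ℕ, X ⟶ X)).map (homOfLE h) = 𝟙 X := by
        intro m m' h
        induction m', h using Nat.le_induction with
        | base =>
          rw [show homOfLE _ = 𝟙 m from Subsingleton.elim _ _]
          exact CategoryTheory.Functor.map_id _ m
        | succ k hk ih =>
          rw [show (homOfLE _ : m ⟶ k+1) = homOfLE hk ≫ homOfLE (Nat.le_succ k) from
              Subsingleton.elim _ _, Functor.map_comp, ih,
            show (homOfLE (Nat.le_succ k) : k ⟶ k+1) = homOfLE (Nat.le_add_right k 1) from rfl,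
            Functor.ofSequence_map_homOfLE_succ]
          exact Category.comp_id _
      have hmap : ∀ {m m' : ℕ} (φ : m ⟶ m'),
          (Functor.ofSequence (fun _ => 𝟙 X : ∀ _ : ℕ, X ⟶ X)).map φ = 𝟙 X := by
        intro m m' φ
        rw [show φ = homOfLE (leOfHom φ) from Subsingleton.elim _ _]
        exact hmap' _ _ _
      set D := Functor.ofSequence (fun _ => 𝟙 X : ∀ _ : ℕ, X ⟶ X) ⋙ preadditiveYoneda with hD
      have hDobj : ∀ m : ℕ, D.obj m = preadditiveYoneda.obj X := fun _ => rfl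
      have hDmap : ∀ {m m' : ℕ} (φ : m ⟶ m'),
          D.map φ = eqToHom (hDobj m) ≫ 𝟙 (preadditiveYoneda.obj X) ≫ eqToHom (hDobj m').symm := by
        intro m m' φ
        show preadditiveYoneda.map ((Functor.ofSequence _).map φ) = _
        rw [hmap φ]
        simp
        exact (preadditiveYoneda.map_id X).trans rfl
      let κ : Cocone D :=
        { pt := preadditiveYoneda.obj X,
          ι := { app := fun m => eqToHom (hDobj m),
                 naturality := fun m m' φ => by rw [hDmap φ]; simp } }
      have hι : ∀ (s : Cocone D) (m : ℕ), s.ι.app m = eqToHom (hDobj m) ≫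
          eqToHom (hDobj 0).symm ≫ s.ι.app 0 := by
        intro s m
        induction m with
        | zero => simp
        | succ k ih =>
          have hw := s.w (homOfLE (Nat.le_succ k))
          rw [hDmap] at hw
          have hw' : s.ι.app (k+1) = eqToHom (hDobj (k+1)) ≫ eqToHom (hDobj k).symm ≫
              s.ι.app k := by
            rw [← hw]
            simp
          rw [hw', ih]
          simp
      have hκ : IsColimit κ :=
        { desc := fun s => eqToHom (hDobj 0).symm ≫ s.ι.app 0
          fac := fun s m => by
            rw [hι s m]
            try simp [κ]
          uniq := fun s φ hφ => by
            show φ = eqToHom (hDobj 0).symm ≫ s.ι.app 0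
            have h0 := hφ 0
            simp only [κ] at h0
            rw [← h0]
            simp }
      exact ⟨hκ.coconePointUniqueUpToIso (colimit.isColimit D)⟩
  · -- memC
    obtain ⟨a, ha⟩ := (hequiv (n+2)).1
    refine ⟨a, fun W hW => ?_⟩
    have hle : (W⟦-((n:ℤ)+2)⟧ : C) ∈ T.le :=
      T.le_iso (shiftCongr W (by push_cast; ring)) (ha W hW)
    have hvan : ∀ f : W ⟶ X, f = 0 := fun f => T.vanish hle hXn (by omega) f
    have : Subsingleton ((preadditiveYoneda.obj X).obj (Opposite.op W)) := by
      constructor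
      intro f g
      show (f : W ⟶ X) = (g : W ⟶ X)
      rw [hvan f, hvan g]
    exact AddCommGrpCat.isZero_of_subsingleton _

end MainProof



section MainProofB

variable {C : Type} [SmallCategory C] [HasZeroObject C] [HasShift C ℤ]
  [Preadditive C] [∀ n : ℤ, (shiftFunctor C n).Additive] [Pretriangulated C]

set_option maxHeartbeats 1000000 in
lemma partB (M : ℕ → Set C) (hM : IsGoodMetric M) (T : TStructure C)
    (hequiv : ∀ n : ℕ, (∃ a : ℕ, ∀ X ∈ M a, (X⟦(-(n : ℤ))⟧ : C) ∈ T.le) ∧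
      (∃ b : ℕ, ∀ X : C, (X⟦(-(b : ℤ))⟧ : C) ∈ T.le → X ∈ M n))
    (F : Cᵒᵖ ⥤ AddCommGrpCat) (hF : memS C M Set.univ F) :
    ∃ X : C, (∃ n : ℕ, (X⟦(-(n : ℤ))⟧ : C) ∈ T.ge) ∧
      Nonempty (F ≅ preadditiveYoneda.obj X) := by
  obtain ⟨⟨c, hcauchy, -, ⟨eF⟩⟩, j, hj⟩ := hF
  obtain ⟨b, hb⟩ := (hequiv j).2
  obtain ⟨a, ha⟩ := (hequiv (b+4)).1
  obtain ⟨N, hN⟩ := hcauchy a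
  set D₀ : ℕ ⥤ C := (CategoryTheory.Functor.mk c.X (fun φ => (Functor.ofSequence c.f).map φ)
    (fun m => (Functor.ofSequence c.f).map_id m)
    (fun φ ψ => (Functor.ofSequence c.f).map_comp φ ψ)) with hD₀
  set D := D₀ ⋙ preadditiveYoneda with hD
  -- chain map composition lemmas
  have hcomp : ∀ {m m' m'' : ℕ} (h1 : m ≤ m') (h2 : m' ≤ m''),
      D₀.map (homOfLE h1) ≫ D₀.map (homOfLE h2) = D₀.map (homOfLE (h1.trans h2)) := by
    intro _ _ _ h1 h2
    rw [← D₀.map_comp]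
    congr 1
  have hfse : ∀ m : ℕ, D₀.map (homOfLE (Nat.le_succ m)) = c.f m := by
    intro m
    rw [show (homOfLE (Nat.le_succ m) : m ⟶ m+1) = homOfLE (Nat.le_add_right m 1) from rfl]
    exact Functor.ofSequence_map_homOfLE_succ c.f m
  -- truncations of each term of the chain
  obtain ⟨P, Xt, u, p, w, hP, hX, hTr⟩ :
      ∃ (P Xt : ℕ → C) (u : ∀ m, P m ⟶ c.X m) (p : ∀ m, c.X m ⟶ Xt m)
        (w : ∀ m, Xt m ⟶ ((P m)⟦(1:ℤ)⟧ : C)),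
        (∀ m, ((P m)⟦-((b:ℤ)+1+2)⟧ : C) ∈ T.le) ∧
        (∀ m, ((Xt m)⟦-((b:ℤ)+1+1)⟧ : C) ∈ T.ge) ∧
        (∀ m, Triangle.mk (u m) (p m) (w m) ∈ distTriang C) := by
    choose P Xt u p w h1 h2 h3 using fun m => T.trunc ((b:ℤ)+1) (c.X m)
    exact ⟨P, Xt, u, p, w, h1, h2, h3⟩
  have hP1 : ∀ m, (((P m)⟦(1:ℤ)⟧ : C)⟦-((b:ℤ)+4)⟧ : C) ∈ T.le := fun m =>
    T.le_iso (shsh (P m) 1 (-((b:ℤ)+4)) (-((b:ℤ)+1+2)) (by ring)).symm (hP m)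
  -- factoring through the truncation is unique
  have zeroFactor : ∀ (m m' : ℕ) (δ : Xt m ⟶ Xt m'), p m ≫ δ = 0 → δ = 0 := by
    intro m m' δ h0
    obtain ⟨ε, hε0⟩ := Triangle.yoneda_exact₂ _ (rot_of_distTriang _ (hTr m)) δ h0
    have hε : δ = w m ≫ ε := hε0
    rw [hε, T.vanish (hP1 m) (hX m') (by omega) ε, Limits.comp_zero]
  -- the isomorphisms between consecutive truncations
  have step : ∀ m, N ≤ m → ∃ (x : Xt m ⟶ Xt (m+1)) (s : Xt (m+1) ⟶ Xt m),
      p m ≫ x = c.f m ≫ p (m+1) ∧ x ≫ s = 𝟙 (Xt m) ∧ s ≫ x = 𝟙 (Xt (m+1)) := by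
    intro m hm
    obtain ⟨Z, ⟨zg, zh, hzdist⟩, hZM⟩ := hN m hm
    have hZle : (Z⟦-((b:ℤ)+4)⟧ : C) ∈ T.le :=
      T.le_iso (shiftCongr Z (by push_cast; ring)) (ha Z hZM)
    have hZ1le : ((Z⟦(-1:ℤ)⟧ : C)⟦-((b:ℤ)+3)⟧ : C) ∈ T.le :=
      T.le_iso (shsh Z (-1) (-((b:ℤ)+3)) (-((b:ℤ)+4)) (by ring)).symm hZle
    obtain ⟨x, hx⟩ : ∃ x : Xt m ⟶ Xt (m+1), c.f m ≫ p (m+1) = p m ≫ x :=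
      Triangle.yoneda_exact₂ _ (hTr m) (c.f m ≫ p (m+1))
        (T.vanish (hP m) (hX (m+1)) (by omega) _)
    obtain ⟨r, hr⟩ : ∃ r : c.X (m+1) ⟶ Xt m, p m = c.f m ≫ r :=
      Triangle.yoneda_exact₂ _ (inv_rot_of_distTriang _ hzdist) (p m)
        (T.vanish hZ1le (hX m) (by omega) _)
    obtain ⟨s, hs⟩ : ∃ s : Xt (m+1) ⟶ Xt m, r = p (m+1) ≫ s :=
      Triangle.yoneda_exact₂ _ (hTr (m+1)) r
        (T.vanish (hP (m+1)) (hX m) (by omega) _)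
    have hxs : x ≫ s = 𝟙 (Xt m) := by
      have h0 : p m ≫ (x ≫ s - 𝟙 (Xt m)) = 0 := by
        rw [Preadditive.comp_sub, Category.comp_id, ← Category.assoc, ← hx,
          Category.assoc, ← hs, ← hr, sub_self]
      have h1 := zeroFactor m m _ h0
      rwa [sub_eq_zero] at h1
    have hrx : r ≫ x = p (m+1) := by
      have h1 : c.f m ≫ (r ≫ x - p (m+1)) = 0 := by
        rw [Preadditive.comp_sub, ← Category.assoc, ← hr, hx, sub_self]
      obtain ⟨ζ, hζ⟩ : ∃ ζ : Z ⟶ Xt (m+1), r ≫ x - p (m+1) = zg ≫ ζ :=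
        Triangle.yoneda_exact₂ _ hzdist _ h1
      rw [T.vanish hZle (hX (m+1)) (by omega) ζ, Limits.comp_zero] at hζ
      rwa [sub_eq_zero] at hζ
    have hsx : s ≫ x = 𝟙 (Xt (m+1)) := by
      have h0 : p (m+1) ≫ (s ≫ x - 𝟙 (Xt (m+1))) = 0 := by
        rw [Preadditive.comp_sub, Category.comp_id, ← Category.assoc, ← hs, hrx, sub_self]
      have h1 := zeroFactor (m+1) (m+1) _ h0
      rwa [sub_eq_zero] at h1
    exact ⟨x, s, hx.symm, hxs, hsx⟩
  -- extension of maps to the truncation along the chain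
  have extend : ∀ m, N ≤ m → ∀ (φ : c.X m ⟶ Xt N),
      ∃ ψ : c.X (m+1) ⟶ Xt N, φ = c.f m ≫ ψ := by
    intro m hm φ
    obtain ⟨Z, ⟨zg, zh, hzdist⟩, hZM⟩ := hN m hm
    have hZle : (Z⟦-((b:ℤ)+4)⟧ : C) ∈ T.le :=
      T.le_iso (shiftCongr Z (by push_cast; ring)) (ha Z hZM)
    have hZ1le : ((Z⟦(-1:ℤ)⟧ : C)⟦-((b:ℤ)+3)⟧ : C) ∈ T.le :=
      T.le_iso (shsh Z (-1) (-((b:ℤ)+3)) (-((b:ℤ)+4)) (by ring)).symm hZle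
    obtain ⟨ψ, hψ⟩ := Triangle.yoneda_exact₂ _ (inv_rot_of_distTriang _ hzdist) φ
      (T.vanish hZ1le (hX N) (by omega) _)
    exact ⟨ψ, hψ⟩
  choose extψ hext using extend
  -- the cocone maps G m
  let G : ∀ m : ℕ, c.X m ⟶ Xt N := fun m => Nat.rec
    (D₀.map (homOfLE (Nat.zero_le N)) ≫ p N)
    (fun k prev => if h : N ≤ k then extψ k h prev
      else D₀.map (homOfLE (by omega : k+1 ≤ N)) ≫ p N) m
  have Gsucc : ∀ m (h : N ≤ m), G (m+1) = extψ m h (G m) := by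
    intro m h
    show (if h' : N ≤ m then extψ m h' (G m) else _) = _
    rw [dif_pos h]
  have Gsmall : ∀ m (h : m ≤ N), G m = D₀.map (homOfLE h) ≫ p N := by
    intro m h
    cases m with
    | zero => rfl
    | succ k =>
      have hk : ¬ (N ≤ k) := by omega
      show (if h' : N ≤ k then _ else _) = _
      rw [dif_neg hk]
  have GN : G N = p N := by
    rw [Gsmall N le_rfl, show (homOfLE le_rfl : N ⟶ N) = 𝟙 N from Subsingleton.elim _ _,
      CategoryTheory.Functor.map_id]
    exact Category.id_comp _
  have Gcoc : ∀ m, c.f m ≫ G (m+1) = G m := by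
    intro m
    by_cases h : N ≤ m
    · rw [Gsucc m h]
      exact (hext m h (G m)).symm
    · have h1 : m + 1 ≤ N := by omega
      rw [Gsmall (m+1) h1, Gsmall m (by omega : m ≤ N), ← hfse m, ← Category.assoc,
        hcomp (Nat.le_succ m) h1]
  have Gnat : ∀ (m m' : ℕ) (h : m ≤ m'), D₀.map (homOfLE h) ≫ G m' = G m := by
    intro m m' h
    induction m', h using Nat.le_induction with
    | base =>
      rw [show (homOfLE le_rfl : m ⟶ m) = 𝟙 m from Subsingleton.elim _ _,
        CategoryTheory.Functor.map_id]
      exact Category.id_comp _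
    | succ k hk ih =>
      rw [show (homOfLE _ : m ⟶ k+1) = homOfLE hk ≫ homOfLE (Nat.le_succ k) from
        Subsingleton.elim _ _, D₀.map_comp, Category.assoc, hfse, Gcoc, ih]
  -- factorization of G through truncations
  have Gfac : ∀ m, N ≤ m → ∃ ε : Xt m ⟶ Xt N, G m = p m ≫ ε ∧ IsIso ε := by
    intro m h
    induction m, h using Nat.le_induction with
    | base => exact ⟨𝟙 _, by rw [GN, Category.comp_id], inferInstance⟩
    | succ k hk ih =>
      obtain ⟨ε, hε, hIso⟩ := ih
      obtain ⟨x, s, hpx, hxs, hsx⟩ := step k hk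
      have h0 : u (k+1) ≫ G (k+1) = 0 := T.vanish (hP (k+1)) (hX N) (by omega) _
      obtain ⟨ε', hε'⟩ : ∃ ε' : Xt (k+1) ⟶ Xt N, G (k+1) = p (k+1) ≫ ε' :=
        Triangle.yoneda_exact₂ _ (hTr (k+1)) (G (k+1)) h0
      have hrel : p k ≫ (ε - x ≫ ε') = 0 := by
        rw [Preadditive.comp_sub, ← hε, ← Category.assoc, hpx, Category.assoc, ← hε',
          Gcoc, sub_self]
      have h2 := zeroFactor k N _ hrel
      have hxε : ε = x ≫ ε' := by rwa [sub_eq_zero] at h2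
      have hε'eq : ε' = s ≫ ε := by
        rw [hxε, ← Category.assoc, hsx, Category.id_comp]
      refine ⟨ε', hε', ?_⟩
      rw [hε'eq]
      letI : IsIso s := ⟨x, hsx, hxs⟩
      letI := hIso
      infer_instance
  -- elements of the colimit die when mapped to the zero functor values
  have dies : ∀ (W : C), (W⟦-(b:ℤ)⟧ : C) ∈ T.le → ∀ (m : ℕ) (wv : W ⟶ c.X m),
      ∃ (m' : ℕ) (h : m ≤ m'), wv ≫ D₀.map (homOfLE h) = 0 := by
    intro W hW m wv
    have hz0 : IsZero (F.obj (Opposite.op W)) := hj W (hb W hW)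
    have hz1 : IsZero ((colimit D).obj (Opposite.op W)) :=
      hz0.of_iso (eF.app (Opposite.op W)).symm
    have hz2 : IsZero (colimit (D ⋙ (evaluation Cᵒᵖ AddCommGrpCat).obj (Opposite.op W))) :=
      hz1.of_iso (colimitObjIsoColimitCompEvaluation D (Opposite.op W)).symm
    set H := D ⋙ (evaluation Cᵒᵖ AddCommGrpCat).obj (Opposite.op W) with hH
    have hzel : ∀ ξ : (colimit H : AddCommGrpCat), ξ = 0 := by
      intro ξ
      have h1 : (𝟙 (colimit H) : colimit H ⟶ colimit H) = 0 := hz2.eq_of_src _ _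
      have h2 := congrArg (fun (f : colimit H ⟶ colimit H) => f ξ) h1
      simpa using h2
    have e1 : colimit.ι H m (show ((H.obj m : AddCommGrpCat) : Type) from wv) =
        colimit.ι H m (0 : (H.obj m : AddCommGrpCat)) := by
      rw [hzel (colimit.ι H m (show ((H.obj m : AddCommGrpCat) : Type) from wv)),
        hzel (colimit.ι H m (0 : (H.obj m : AddCommGrpCat)))]
    obtain ⟨k, φ, ψ, hk⟩ := Concrete.colimit_exists_of_rep_eq H
      (show ((H.obj m : AddCommGrpCat) : Type) from wv) (0 : (H.obj m : AddCommGrpCat)) e1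
    have hk2 : H.map φ (show ((H.obj m : AddCommGrpCat) : Type) from wv) =
        H.map ψ (0 : (H.obj m : AddCommGrpCat)) := hk
    rw [map_zero] at hk2
    refine ⟨k, leOfHom φ, ?_⟩
    have hφ : φ = homOfLE (leOfHom φ) := Subsingleton.elim _ _
    rw [← hφ]
    have hel : (wv ≫ D₀.map φ : W ⟶ c.X k) =
        H.map φ (show ((H.obj m : AddCommGrpCat) : Type) from wv) := rfl
    rw [hel, hk2]
    rfl
  -- the retraction ρ0
  have hPNle : ((P N)⟦-(b:ℤ)⟧ : C) ∈ T.le := T.le_up (hP N) (by omega)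
  obtain ⟨m₁, hm₁, hu0⟩ := dies (P N) hPNle N (u N)
  obtain ⟨ρ0, hρ0⟩ : ∃ ρ : Xt N ⟶ c.X m₁, D₀.map (homOfLE hm₁) = p N ≫ ρ :=
    Triangle.yoneda_exact₂ _ (hTr N) (D₀.map (homOfLE hm₁)) hu0
  have hρG : ρ0 ≫ G m₁ = 𝟙 (Xt N) := by
    have h0 : p N ≫ (ρ0 ≫ G m₁ - 𝟙 (Xt N)) = 0 := by
      rw [Preadditive.comp_sub, ← Category.assoc, ← hρ0, Gnat, Category.comp_id, GN, sub_self]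
    have h1 := zeroFactor N N _ h0
    rwa [sub_eq_zero] at h1
  -- the cocone and the comparison map
  let κ : Cocone D :=
    { pt := preadditiveYoneda.obj (Xt N)
      ι := { app := fun m => preadditiveYoneda.map (G m)
             naturality := fun m m' φ => by
               show preadditiveYoneda.map (D₀.map φ) ≫ preadditiveYoneda.map (G m') = _
               rw [← preadditiveYoneda.map_comp,
                 show φ = homOfLE (leOfHom φ) from Subsingleton.elim _ _, Gnat]
               simp } }
  let θ : colimit D ⟶ preadditiveYoneda.obj (Xt N) := colimit.desc D κ
  have hegood : ∀ (W : Cᵒᵖ), IsIso (θ.app W) := by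
    intro W
    set H := D ⋙ (evaluation Cᵒᵖ AddCommGrpCat).obj W with hH
    set e := colimitObjIsoColimitCompEvaluation D W with he
    set θW := e.inv ≫ θ.app W with hθW
    have hcomm : ∀ m : ℕ, colimit.ι H m ≫ θW = (preadditiveYoneda.map (G m)).app W := by
      intro m
      rw [hθW, ← Category.assoc, he, colimitObjIsoColimitCompEvaluation_ι_inv D m W,
        ← NatTrans.comp_app]
      show ((colimit.ι D m ≫ colimit.desc D κ)).app W = _
      rw [colimit.ι_desc]
    have hact : ∀ (m : ℕ) (wv : W.unop ⟶ c.X m),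
        θW (colimit.ι H m wv) = wv ≫ G m := by
      intro m wv
      have h1 := congrArg (fun (f : H.obj m ⟶ (preadditiveYoneda.obj (Xt N)).obj W) => f wv)
        (hcomm m)
      exact h1
    have hker : ∀ ξ : (colimit H : AddCommGrpCat), θW ξ = 0 → ξ = 0 := by
      intro ξ hξ
      obtain ⟨m, wv0, hrep⟩ := Concrete.colimit_exists_rep H ξ
      have hwg : (show W.unop ⟶ c.X m from wv0) ≫ G m = 0 := by
        rw [← hact m (show W.unop ⟶ c.X m from wv0)]
        have hrep' : colimit.ι H m (show W.unop ⟶ c.X m from wv0) = ξ := hrep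
        rw [hrep']
        exact hξ
      have hmm₀ : m ≤ max m N := le_max_left _ _
      set wv₀ := (show W.unop ⟶ c.X m from wv0) ≫ D₀.map (homOfLE hmm₀) with hwv₀
      have hwg₀ : wv₀ ≫ G (max m N) = 0 := by
        rw [hwv₀, Category.assoc, Gnat, hwg]
      obtain ⟨ε, hε, hIso⟩ := Gfac (max m N) (le_max_right _ _)
      have hwp : wv₀ ≫ p (max m N) = 0 := by
        letI := hIso
        have h3 : (wv₀ ≫ p (max m N)) ≫ ε = 0 ≫ ε := by
          rw [Category.assoc, ← hε, hwg₀, Limits.zero_comp]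
        exact (cancel_mono ε).1 h3
      obtain ⟨ψ, hψ⟩ : ∃ ψ : W.unop ⟶ P (max m N), wv₀ = ψ ≫ u (max m N) :=
        Triangle.coyoneda_exact₂ _ (hTr (max m N)) wv₀ hwp
      have hPm₀ : ((P (max m N))⟦-(b:ℤ)⟧ : C) ∈ T.le := T.le_up (hP (max m N)) (by omega)
      obtain ⟨m₂, hm₂, hu2⟩ := dies (P (max m N)) hPm₀ (max m N) (u (max m N))
      have hwv2 : (show W.unop ⟶ c.X m from wv0) ≫ D₀.map (homOfLE (hmm₀.trans hm₂)) = 0 := by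
        rw [← hcomp hmm₀ hm₂, ← Category.assoc, ← hwv₀, hψ, Category.assoc, hu2,
          Limits.comp_zero]
      have h5 : colimit.ι H m₂ (H.map (homOfLE (hmm₀.trans hm₂)) wv0) = ξ := by
        rw [← hrep]
        exact colimit.w_apply H (homOfLE (hmm₀.trans hm₂)) wv0
      rw [← h5]
      have hel : H.map (homOfLE (hmm₀.trans hm₂)) wv0 =
          ((show W.unop ⟶ c.X m from wv0) ≫ D₀.map (homOfLE (hmm₀.trans hm₂)) :
            W.unop ⟶ c.X m₂) := rfl
      rw [hel, hwv2]
      exact map_zero _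
    have hinj : Function.Injective θW := by
      intro ξ ξ' hξξ'
      have h7 : θW (ξ - ξ') = 0 := by rw [map_sub, hξξ', sub_self]
      have h8 := hker _ h7
      rwa [sub_eq_zero] at h8
    have hsurj : Function.Surjective θW := by
      intro h
      refine ⟨colimit.ι H m₁ (((show W.unop ⟶ Xt N from h) ≫ ρ0 : W.unop ⟶ c.X m₁)), ?_⟩
      rw [hact m₁ ((show W.unop ⟶ Xt N from h) ≫ ρ0), Category.assoc, hρG,
        Category.comp_id]
    have hiso : IsIso θW := by
      rw [ConcreteCategory.isIso_iff_bijective]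
      exact ⟨hinj, hsurj⟩
    have : θ.app W = e.hom ≫ θW := by rw [hθW]; simp
    rw [this]
    infer_instance
  haveI : IsIso θ := NatIso.isIso_of_isIso_app θ
  refine ⟨Xt N, ⟨b+2, T.ge_iso (shiftCongr (Xt N) (by push_cast; ring)) (hX N)⟩, ?_⟩
  exact ⟨eF ≪≫ @asIso _ _ _ _ θ this⟩

end MainProofB

/-- (Corollary `Unexpected`.)  If a good metric `M` on `𝒮` is equivalent
to the metric `{𝒮^{≤-n}}ₙ` induced by a t-structure `(𝒮^{≤0}, 𝒮^{≥0})`, then the Yoneda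
functor restricts to an equivalence `𝒮⁺ ≃ 𝔖(𝒮)`; in particular, if the t-structure is
bounded below, `𝒮 ≃ 𝔖(𝒮)`. -/
theorem plus_part_equiv_completion
    (C : Type) [SmallCategory C] [HasZeroObject C] [HasShift C ℤ]
    [Preadditive C] [∀ n : ℤ, (shiftFunctor C n).Additive] [Pretriangulated C]
    (M : ℕ → Set C) (hM : IsGoodMetric M) (T : TStructure C)
    (hequiv : ∀ n : ℕ, (∃ a : ℕ, ∀ X ∈ M a, (X⟦(-(n : ℤ))⟧ : C) ∈ T.le) ∧
      (∃ b : ℕ, ∀ X : C, (X⟦(-(b : ℤ))⟧ : C) ∈ T.le → X ∈ M n)) :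
    ((∀ X : C, (∃ n : ℕ, (X⟦(-(n : ℤ))⟧ : C) ∈ T.ge) →
        memS C M Set.univ (preadditiveYoneda.obj X)) ∧
     (∀ F : Cᵒᵖ ⥤ AddCommGrpCat, memS C M Set.univ F →
        ∃ X : C, (∃ n : ℕ, (X⟦(-(n : ℤ))⟧ : C) ∈ T.ge) ∧
          Nonempty (F ≅ preadditiveYoneda.obj X))) ∧
    (T.BoundedBelow →
      (∀ X : C, memS C M Set.univ (preadditiveYoneda.obj X)) ∧
      (∀ F : Cᵒᵖ ⥤ AddCommGrpCat, memS C M Set.univ F →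
        ∃ X : C, Nonempty (F ≅ preadditiveYoneda.obj X))) := by
  refine ⟨⟨fun X hX => partA M hM T hequiv X hX, fun F hF => partB M hM T hequiv F hF⟩, ?_⟩
  intro hBB
  exact ⟨fun X => partA M hM T hequiv X (hBB X),
    fun F hF => (partB M hM T hequiv F hF).imp (fun X h => h.2)⟩

end Paper
end

section
/- Let 𝒮 be an essentially small triangulated category and G an object of 𝒮 such that there exists e ∈ ℕ with the property that every X ∈ 𝒮 satisfying Hom(X, G[j]) = 0 for all j ≤ -1 belongs to ⟨G⟩^{(-∞,e]} (i.e. fd(𝒮^op, G^op) < ∞). Then any two bounded t-structures on 𝒮 are equivalent. -/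
open CategoryTheory Limits Pretriangulated

universe v u

namespace Paper

variable (C : Type u) [Category.{v} C] [HasZeroObject C] [HasShift C ℤ]
  [Preadditive C] [∀ n : ℤ, (shiftFunctor C n).Additive] [Pretriangulated C]

variable {C}

variable (C)

variable {C}

section Helpers

/-- Shifts of a direct sum decomposition. -/
lemma IsDirSum.shift {Z X Y : C} (h : IsDirSum Z X Y) (n : ℤ) :
    IsDirSum (Z⟦n⟧ : C) (X⟦n⟧ : C) (Y⟦n⟧ : C) := by
  obtain ⟨i₁, i₂, p₁, p₂, h1, h2, h3, h4, h5⟩ := h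
  refine ⟨(shiftFunctor C n).map i₁, (shiftFunctor C n).map i₂,
    (shiftFunctor C n).map p₁, (shiftFunctor C n).map p₂, ?_, ?_, ?_, ?_, ?_⟩
  · rw [← Functor.map_comp, h1, CategoryTheory.Functor.map_id]
  · rw [← Functor.map_comp, h2, CategoryTheory.Functor.map_id]
  · rw [← Functor.map_comp, h3, Functor.map_zero]
  · rw [← Functor.map_comp, h4, Functor.map_zero]
  · rw [← Functor.map_comp, ← Functor.map_comp, ← Functor.map_add, h5, CategoryTheory.Functor.map_id]

namespace TStructure

variable (T : TStructure C)

lemma le_shift' {X : C} (hX : X ∈ T.le) (k : ℤ) (hk : 0 ≤ k) : (X⟦k⟧ : C) ∈ T.le := by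
  have key : ∀ j : ℕ, (X⟦(j : ℤ)⟧ : C) ∈ T.le := by
    intro j
    induction j with
    | zero => exact T.le_iso ((shiftFunctorZero C ℤ).symm.app X) hX
    | succ n ih =>
        exact T.le_iso
          ((shiftFunctorAdd' C (n : ℤ) 1 (((n+1 : ℕ)) : ℤ) (by push_cast; ring)).symm.app X) (T.le_shift _ ih)
  have h := key k.toNat
  rw [show ((k.toNat : ℤ)) = k by omega] at h
  exact h

lemma ge_shift' {X : C} (hX : X ∈ T.ge) (k : ℤ) (hk : k ≤ 0) : (X⟦k⟧ : C) ∈ T.ge := by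
  have key : ∀ j : ℕ, (X⟦(-(j : ℤ))⟧ : C) ∈ T.ge := by
    intro j
    induction j with
    | zero =>
        refine T.ge_iso ((shiftFunctorZero C ℤ).symm.app X ≪≫ eqToIso ?_) hX
        norm_num
    | succ n ih =>
        exact T.ge_iso
          ((shiftFunctorAdd' C (-(n : ℤ)) (-1) (-(((n+1 : ℕ)) : ℤ)) (by push_cast; ring)).symm.app X)
          (T.ge_shift _ ih)
  have h := key (-k).toNat
  rw [show (-(((-k).toNat : ℕ) : ℤ)) = k by omega] at h
  exact h

/-- `X ∈ 𝒮^{≤ n}`. -/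
def leN (n : ℤ) (X : C) : Prop := (X⟦n⟧ : C) ∈ T.le

/-- `X ∈ 𝒮^{≥ n}`. -/
def geN (n : ℤ) (X : C) : Prop := (X⟦n⟧ : C) ∈ T.ge

lemma leN_iso {X Y : C} (e : X ≅ Y) {n : ℤ} (h : T.leN n X) : T.leN n Y :=
  T.le_iso ((shiftFunctor C n).mapIso e) h

lemma geN_iso {X Y : C} (e : X ≅ Y) {n : ℤ} (h : T.geN n X) : T.geN n Y :=
  T.ge_iso ((shiftFunctor C n).mapIso e) h

lemma leN_mono {X : C} {m n : ℤ} (hmn : m ≤ n) (h : T.leN m X) : T.leN n X :=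
  T.le_iso ((shiftFunctorAdd' C m (n - m) n (by ring)).symm.app X)
    (T.le_shift' h (n - m) (by omega))

lemma geN_mono {X : C} {m n : ℤ} (hmn : m ≤ n) (h : T.geN n X) : T.geN m X :=
  T.ge_iso ((shiftFunctorAdd' C n (m - n) m (by ring)).symm.app X)
    (T.ge_shift' h (m - n) (by omega))

lemma leN_shift {X : C} {n : ℤ} (h : T.leN n X) (k : ℤ) : T.leN (n - k) (X⟦k⟧ : C) :=
  T.le_iso ((shiftFunctorAdd' C k (n - k) n (by ring)).app X) h

lemma geN_shift {X : C} {n : ℤ} (h : T.geN n X) (k : ℤ) : T.geN (n - k) (X⟦k⟧ : C) :=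
  T.ge_iso ((shiftFunctorAdd' C k (n - k) n (by ring)).app X) h

lemma hom_zero' {X Y : C} {a b : ℤ} (ha : T.leN a X) (hb : T.geN b Y) (hab : a < b)
    (f : X ⟶ Y) : f = 0 := by
  have hY : T.geN (a + 1) Y := T.geN_mono (by omega) hb
  have e1 : ((X⟦a⟧ : C)⟦(1:ℤ)⟧ : C) ≅ (X⟦a + 1⟧ : C) :=
    ((shiftFunctorAdd' C a 1 (a+1) rfl).symm.app X)
  have h2 : e1.hom ≫ (shiftFunctor C (a+1)).map f = 0 :=
    T.hom_zero _ ha _ hY _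
  have h3 : (shiftFunctor C (a+1)).map f = 0 := by
    rw [← cancel_epi e1.hom, comp_zero]
    exact h2
  exact (shiftFunctor C (a+1)).map_injective (by rw [h3, Functor.map_zero])

lemma le_of_perp {X : C} (h : ∀ Y ∈ T.ge, ∀ f : (X⟦(1:ℤ)⟧ : C) ⟶ Y, f = 0) :
    X ∈ T.le := by
  obtain ⟨A, B, hA, hB, f, g, hh, hT⟩ := T.triangle (X⟦(1:ℤ)⟧)
  have hg : g = 0 := h B hB g
  obtain ⟨t, ht⟩ := Triangle.yoneda_exact₃ _ hT (𝟙 B)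
    (by change g ≫ 𝟙 B = 0; rw [hg, zero_comp])
  have ht0 : t = 0 := T.hom_zero _ (T.le_shift A hA) _ hB t
  have hzB : IsZero B := by
    rw [IsZero.iff_id_eq_zero, ht, ht0, comp_zero]
    rfl
  have : IsIso f := (Triangle.isZero₃_iff_isIso₁ _ hT).1 hzB
  have e3 := shiftFunctorCompIsoId C (1 : ℤ) (-1 : ℤ) (by ring)
  have e2 : A ≅ X :=
    (e3.symm.app A) ≪≫ (shiftFunctor C (-1 : ℤ)).mapIso (asIso f) ≪≫ (e3.app X)
  exact T.le_iso e2 hA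

lemma le_ext (T' : Triangle C) (hT' : T' ∈ distTriang C)
    (h1 : T'.obj₁ ∈ T.le) (h3 : T'.obj₃ ∈ T.le) : T'.obj₂ ∈ T.le := by
  apply T.le_of_perp
  intro W hW φ
  have hS : (Triangle.shiftFunctor C (1 : ℤ)).obj T' ∈ distTriang C := by
    simpa using Triangle.shift_distinguished T' hT' 1
  obtain ⟨t, ht⟩ := Triangle.yoneda_exact₂ _ hS φ (T.hom_zero _ h1 _ hW _)
  have ht0 : t = 0 := T.hom_zero _ h3 _ hW t
  rw [ht, ht0, comp_zero]
  rfl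

lemma le_zero {X : C} (h : IsZero X) : X ∈ T.le := by
  apply T.le_of_perp
  intro Y hY f
  have hz : IsZero (X⟦(1:ℤ)⟧ : C) := by
    rw [IsZero.iff_id_eq_zero] at h ⊢
    rw [← CategoryTheory.Functor.map_id, h, Functor.map_zero]
  exact hz.eq_of_src f 0

lemma le_dirSum {Z X Y : C} (h : IsDirSum Z X Y) (hX : X ∈ T.le) (hY : Y ∈ T.le) :
    Z ∈ T.le := by
  obtain ⟨i₁, i₂, p₁, p₂, h1, h2, h3, h4, h5⟩ := h
  apply T.le_of_perp
  intro W hW f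
  have e1 : (shiftFunctor C (1:ℤ)).map i₁ ≫ f = 0 := T.hom_zero _ hX _ hW _
  have e2 : (shiftFunctor C (1:ℤ)).map i₂ ≫ f = 0 := T.hom_zero _ hY _ hW _
  have hid : 𝟙 (Z⟦(1:ℤ)⟧ : C) =
      (shiftFunctor C (1:ℤ)).map p₁ ≫ (shiftFunctor C (1:ℤ)).map i₁ +
      (shiftFunctor C (1:ℤ)).map p₂ ≫ (shiftFunctor C (1:ℤ)).map i₂ := by
    rw [← Functor.map_comp, ← Functor.map_comp, ← Functor.map_add, h5, CategoryTheory.Functor.map_id]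
  calc f = 𝟙 _ ≫ f := (Category.id_comp f).symm
  _ = 0 := by
      rw [hid, Preadditive.add_comp, Category.assoc, Category.assoc, e1, e2,
        comp_zero, comp_zero, add_zero]

lemma le_smd {Z X Y : C} (h : IsDirSum Z X Y) (hZ : Z ∈ T.le) : X ∈ T.le := by
  obtain ⟨i₁, i₂, p₁, p₂, h1, _, _, _, _⟩ := h
  apply T.le_of_perp
  intro W hW f
  have e1 : (shiftFunctor C (1:ℤ)).map p₁ ≫ f = 0 := T.hom_zero _ hZ _ hW _
  calc f = ((shiftFunctor C (1:ℤ)).map i₁ ≫ (shiftFunctor C (1:ℤ)).map p₁) ≫ f := by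
        rw [← Functor.map_comp, h1, CategoryTheory.Functor.map_id, Category.id_comp]
  _ = 0 := by rw [Category.assoc, e1, comp_zero]

lemma leN_ext {m : ℤ} (T' : Triangle C) (hT' : T' ∈ distTriang C)
    (h1 : T.leN m T'.obj₁) (h3 : T.leN m T'.obj₃) : T.leN m T'.obj₂ := by
  have hS : (Triangle.shiftFunctor C m).obj T' ∈ distTriang C := by
    simpa using Triangle.shift_distinguished T' hT' m
  exact T.le_ext _ hS h1 h3

lemma leN_zero {m : ℤ} {X : C} (h : IsZero X) : T.leN m X := by
  apply T.le_zero
  rw [IsZero.iff_id_eq_zero] at h ⊢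
  rw [← CategoryTheory.Functor.map_id, h, Functor.map_zero]

lemma leN_dirSum {m : ℤ} {Z X Y : C} (h : IsDirSum Z X Y)
    (hX : T.leN m X) (hY : T.leN m Y) : T.leN m Z :=
  T.le_dirSum (h.shift m) hX hY

lemma leN_smd {m : ℤ} {Z X Y : C} (h : IsDirSum Z X Y) (hZ : T.leN m Z) : T.leN m X :=
  T.le_smd (h.shift m) hZ

end TStructure

open TStructure in
lemma gen_le_leN (T : TStructure C) (G : C) (a : ℤ) (hG : T.leN a G) (e : ℕ) :
    ∀ X ∈ gen C G (Set.Iic (e : ℤ)), T.leN (a + e) X := by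
  have hAdd : ∀ X : C, addClos C (shiftsOf C G (Set.Iic (e : ℤ))) X → T.leN (a + e) X := by
    intro X hX
    induction hX with
    | @of X' Y' e' hY =>
        obtain ⟨i, hi, ⟨e2⟩⟩ := hY
        have h1 : T.leN (a - (-i)) ((G⟦(-i : ℤ)⟧ : C)) := T.leN_shift hG (-i)
        have h2 : T.leN (a + e) ((G⟦(-i : ℤ)⟧ : C)) :=
          T.leN_mono (by simp only [Set.mem_Iic] at hi; omega) h1
        exact T.leN_iso ((e'.trans e2).symm) h2
    | zero hX => exact T.leN_zero hX
    | dirSum hX hY h ihX ihY => exact T.leN_dirSum h ihX ihY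
  have hCop : ∀ n : ℕ, ∀ X ∈ coprodN C (shiftsOf C G (Set.Iic (e : ℤ))) n,
      T.leN (a + e) X := by
    intro n
    induction n with
    | zero => exact fun X hX => T.leN_zero hX
    | succ m ih =>
        match m, ih with
        | 0, _ => exact fun X hX => hAdd X hX
        | (m' + 1), ih =>
            rintro Z ⟨X, Y, f, g, hh, hX, hY, hdist⟩
            exact T.leN_ext _ hdist (hAdd X hX) (ih Y hY)
  rintro X ⟨n, Z, Y, hZ, hsum⟩
  exact T.leN_smd hsum (hCop (n + 1) Z hZ)

open TStructure in
lemma key_step (T T' : TStructure C) (G : C) (e : ℕ) (hfdop : fdOpLE C G (e : ℤ))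
    (a : ℤ) (hG' : T'.leN a G) (c : ℤ) (hGc : T.geN (-c) G) :
    ∀ (m : ℤ) (X : C), T.leN m X → T'.leN (a + e + m + c) X := by
  have base : ∀ X : C, T.leN (-c) X → T'.leN (a + e) X := by
    intro X hX
    have hperp : ∀ j : ℤ, j ≤ -1 → ∀ f : X ⟶ (G⟦j⟧ : C), f = 0 := by
      intro j hj f
      have hgj : T.geN (-c - j) ((G⟦j⟧ : C)) := T.geN_shift hGc j
      exact T.hom_zero' hX hgj (by omega) f
    exact gen_le_leN T' G a hG' e X (hfdop X hperp)
  intro m X hX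
  have h1 : T.leN (m - (m + c)) ((X⟦m + c⟧ : C)) := T.leN_shift hX (m + c)
  rw [show m - (m + c) = -c by ring] at h1
  have h2 := base _ h1
  have h3 := T'.leN_shift h2 (-(m + c))
  rw [show a + (e : ℤ) - (-(m + c)) = a + e + m + c by ring] at h3
  exact T'.leN_iso ((shiftFunctorCompIsoId C (m + c) (-(m + c)) (by ring)).app X) h3

end Helpers

/-- If `fd(𝒮ᵒᵖ, Gᵒᵖ) ≤ e` for some object `G` and `e ∈ ℕ`, then any two
bounded t-structures on `𝒮` are equivalent: there is `n ∈ ℕ` with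
`𝒮₁^{≤-n} ⊆ 𝒮₂^{≤0} ⊆ 𝒮₁^{≤n}`. -/
theorem bounded_tstructures_equivalent_of_fdOp_finite
    (C : Type u) [Category.{v} C] [HasZeroObject C] [HasShift C ℤ]
    [Preadditive C] [∀ n : ℤ, (shiftFunctor C n).Additive] [Pretriangulated C]
    (G : C) (e : ℕ) (hfdop : fdOpLE C G (e : ℤ))
    (T₁ T₂ : TStructure C) (h₁ : T₁.Bounded) (h₂ : T₂.Bounded) :
    ∃ n : ℕ, (∀ X : C, (X⟦(-(n : ℤ))⟧ : C) ∈ T₁.le → X ∈ T₂.le) ∧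
      (∀ X ∈ T₂.le, (X⟦(n : ℤ)⟧ : C) ∈ T₁.le) := by
  obtain ⟨a₁, ha₁⟩ := h₁.1 G
  obtain ⟨c₁, hc₁⟩ := h₁.2 G
  obtain ⟨a₂, ha₂⟩ := h₂.1 G
  obtain ⟨c₂, hc₂⟩ := h₂.2 G
  refine ⟨a₁ + c₁ + a₂ + c₂ + e, ?_, ?_⟩
  · intro X hX
    have hX' : T₁.leN (-(((a₁ + c₁ + a₂ + c₂ + e : ℕ) : ℤ))) X := hX
    have h := key_step T₁ T₂ G e hfdop (a₂ : ℤ) ha₂ (c₁ : ℤ) hc₁ _ X hX'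
    have h0 : T₂.leN 0 X := T₂.leN_mono (by push_cast; omega) h
    exact T₂.le_iso ((shiftFunctorZero C ℤ).app X) h0
  · intro X hX
    have h0 : T₂.leN 0 X := T₂.le_iso ((shiftFunctorZero C ℤ).symm.app X) hX
    have h := key_step T₂ T₁ G e hfdop (a₁ : ℤ) ha₁ (c₂ : ℤ) hc₂ 0 X h0
    have : T₁.leN ((a₁ + c₁ + a₂ + c₂ + e : ℕ) : ℤ) X :=
      T₁.leN_mono (by push_cast; omega) h
    exact this


end Paper
end
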